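/- arXiv:1110.4274 — 5 statements merged into one kernel-verified Lean document; each statement's English description precedes it below -/
import Mathlib

section
/- Let T be a complete satisfiable L-theory that is fully VC-minimal. Then every partitioned L-formula φ(x; ȳ) with x a single variable has UDTFS rank ≤ 1 over T. -/
open FirstOrder Language

universe w

/-- `φ(x̄; ȳ)` has UDTFS rank `≤ n` over `T`: there are finitely many formulas
`ψ_ℓ(ȳ; z̄₀, …, z̄_{n-1})` such that, in any model of `T`, every `φ`-type of a tuple
over a finite nonempty parameter set `B` is defined by some `ψ_ℓ(ȳ; c̄₀, …, c̄_{n-1})`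
with the `c̄_j` drawn from `B`. -/
def UDTFSRankLE (L : Language) (T : L.Theory) {α : Type} {q : ℕ}
    (φ : L.Formula (α ⊕ Fin q)) (n : ℕ) : Prop :=
  ∃ (L₀ : ℕ) (ψ : Fin L₀ → L.Formula (Fin q ⊕ (Fin n × Fin q))),
    ∀ (M : Type w) [Nonempty M] [L.Structure M], M ⊨ T →
      ∀ B : Finset (Fin q → M), B.Nonempty → ∀ a : α → M,
        ∃ (ℓ : Fin L₀) (c : Fin n → Fin q → M), (∀ j, c j ∈ B) ∧
          ∀ b ∈ B, ((ψ ℓ).Realize (Sum.elim b fun jk : Fin n × Fin q => c jk.1 jk.2) ↔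
            φ.Realize (Sum.elim a b))

/-- `φ(M; b̄)`, the set defined in `M` by the partitioned formula `φ(x; ȳ)` with
parameters `b̄`. -/
def realizeSet (L : Language) (M : Type*) [L.Structure M] {m : ℕ}
    (φ : L.Formula (Unit ⊕ Fin m)) (b : Fin m → M) : Set M :=
  {a : M | φ.Realize (Sum.elim (fun _ => a) b)}

/-- A family of subsets of `X` has independence dimension `≤ 1` with respect to `X`. -/
def IndepDimLEOne {X : Type*} (𝒜 : Set (Set X)) : Prop :=
  ∀ A ∈ 𝒜, ∀ B ∈ 𝒜, A ∩ B = ∅ ∨ A \ B = ∅ ∨ B \ A = ∅ ∨ (A ∪ B)ᶜ = ∅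

/-- Boolean combinations (in the free variables `(x; ȳ)` with `lg ȳ = m`) of formulas
from `Ψ`, where each formula `ψ(x; z̄) ∈ Ψ` may be instantiated by substituting
variables from `ȳ` for `z̄`. -/
inductive BoolCombOf {L : Language} (Ψ : Set ((k : ℕ) × L.Formula (Unit ⊕ Fin k)))
    (m : ℕ) : L.Formula (Unit ⊕ Fin m) → Prop
  | of (p : (k : ℕ) × L.Formula (Unit ⊕ Fin k)) (hp : p ∈ Ψ) (ρ : Fin p.1 → Fin m) :
      BoolCombOf Ψ m (p.2.relabel (Sum.map id ρ))
  | not {θ : L.Formula (Unit ⊕ Fin m)} : BoolCombOf Ψ m θ → BoolCombOf Ψ m θ.not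
  | and {θ₁ θ₂ : L.Formula (Unit ⊕ Fin m)} :
      BoolCombOf Ψ m θ₁ → BoolCombOf Ψ m θ₂ → BoolCombOf Ψ m (θ₁ ⊓ θ₂)
  | or {θ₁ θ₂ : L.Formula (Unit ⊕ Fin m)} :
      BoolCombOf Ψ m θ₁ → BoolCombOf Ψ m θ₂ → BoolCombOf Ψ m (θ₁ ⊔ θ₂)

/-- `T` is fully VC-minimal: there is a set `Ψ` of partitioned formulas `ψ(x; z̄)`
(`x` a single variable) whose instances have independence dimension `≤ 1` in every
model of `T`, and such that every partitioned formula `φ(x; ȳ)` is `T`-equivalent to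
a Boolean combination of formulas from `Ψ` in the free variables `(x; ȳ)`. -/
def FullyVCMinimal (L : Language) (T : L.Theory) : Prop :=
  ∃ Ψ : Set ((k : ℕ) × L.Formula (Unit ⊕ Fin k)),
    (∀ (M : Type w) [Nonempty M] [L.Structure M], M ⊨ T →
      IndepDimLEOne {S : Set M | ∃ p ∈ Ψ, ∃ b : Fin p.1 → M, S = realizeSet L M p.2 b}) ∧
    ∀ (m : ℕ) (φ : L.Formula (Unit ⊕ Fin m)),
      ∃ θ : L.Formula (Unit ⊕ Fin m), BoolCombOf Ψ m θ ∧
        ∀ (M : Type w) [Nonempty M] [L.Structure M], M ⊨ T →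
          ∀ v : Unit ⊕ Fin m → M, φ.Realize v ↔ θ.Realize v

/-! ### Auxiliary set-theoretic lemmas -/

/-- The "side of `S` containing `a`": `S` if `a ∈ S`, `Sᶜ` otherwise. -/
def starSet {M : Type*} (a : M) (S : Set M) : Set M := {x | x ∈ S ↔ a ∈ S}

lemma mem_starSet {M : Type*} {a x : M} {S : Set M} :
    x ∈ starSet a S ↔ (x ∈ S ↔ a ∈ S) := Iff.rfl

lemma self_mem_starSet {M : Type*} (a : M) (S : Set M) : a ∈ starSet a S := Iff.rfl

lemma starSet_pos {M : Type*} {a : M} {S : Set M} (h : a ∈ S) : starSet a S = S := by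
  ext x; simp [starSet, h]

lemma starSet_neg {M : Type*} {a : M} {S : Set M} (h : a ∉ S) : starSet a S = Sᶜ := by
  ext x; simp [starSet, h]

/-- Independence-dimension-one pairs: the `a`-sides are comparable or cover everything. -/
lemma starSet_pair {M : Type*} (a : M) {A B : Set M}
    (h : A ∩ B = ∅ ∨ A \ B = ∅ ∨ B \ A = ∅ ∨ (A ∪ B)ᶜ = ∅) :
    starSet a A ⊆ starSet a B ∨ starSet a B ⊆ starSet a A ∨
      ∀ x, x ∈ starSet a B ∨ x ∈ starSet a A := by
  simp only [Set.eq_empty_iff_forall_notMem, Set.mem_inter_iff, Set.mem_diff,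
    Set.mem_compl_iff, Set.mem_union, not_and, not_not, not_or] at h
  by_cases hA : a ∈ A <;> by_cases hB : a ∈ B <;> rcases h with h | h | h | h <;>
    first
      | (exfalso; have := h a; tauto)
      | (left; intro x hx; have h1 := h x; rw [mem_starSet] at hx ⊢; tauto)
      | (right; left; intro x hx; have h1 := h x; rw [mem_starSet] at hx ⊢; tauto)
      | (right; right; intro x; have h1 := h x; rw [mem_starSet, mem_starSet]; tauto)

/-- Membership in `A` is determined by the relation of `A` to a minimal `a`-side `T₀`. -/
lemma key_mem {M : Type*} {a : M} {A T₀ : Set M}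
    (haT : a ∈ T₀)
    (hpair : starSet a A ⊆ T₀ ∨ T₀ ⊆ starSet a A ∨ ∀ x, x ∈ T₀ ∨ x ∈ starSet a A)
    (hmin : starSet a A ⊆ T₀ → starSet a A = T₀) :
    a ∈ A ↔ (T₀ ⊆ A ∨ ((T₀ ∩ A).Nonempty ∧ ¬ A ⊆ T₀)) := by
  constructor
  · intro haA
    by_cases hsub : A ⊆ T₀
    · left
      have hst : starSet a A = A := starSet_pos haA
      have h3 := hmin (by rw [hst]; exact hsub)
      rw [hst] at h3
      rw [← h3]
    · exact Or.inr ⟨⟨a, haT, haA⟩, hsub⟩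
  · rintro (h | ⟨⟨x, hxT, hxA⟩, hns⟩)
    · exact h haT
    · by_contra haA
      rcases hpair with hp | hp | hp
      · have h3 := hmin hp
        rw [starSet_neg haA] at h3
        rw [← h3] at hxT
        exact hxT hxA
      · have hx : x ∈ starSet a A := hp hxT
        rw [starSet_neg haA] at hx
        exact hx hxA
      · apply hns
        intro y hyA
        rcases hp y with hy | hy
        · exact hy
        · rw [starSet_neg haA] at hy; exact absurd hyA hy

/-! ### Formula-building auxiliaries -/

/-- A leaf instance: a partitioned formula together with a substitution of its
parameter variables by variables among `ȳ`. -/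
abbrev LeafInst (L : Language) (q : ℕ) :=
  (p : (k : ℕ) × L.Formula (Unit ⊕ Fin k)) × (Fin p.1 → Fin q)

/-- The bounded formula (in one bound variable `x`) saying `x ∈ ψ(M; params)`,
where params are drawn via `side ∘ l.2` from the `2q` free variables. -/
def memF {L : Language} {q : ℕ} (l : LeafInst L q) (side : Fin q → Fin q ⊕ Fin q) :
    L.BoundedFormula (Fin q ⊕ Fin q) 1 :=
  BoundedFormula.relabel
    (Sum.elim (fun _ => Sum.inr (0 : Fin 1)) (fun j => Sum.inl (side (l.2 j)))) l.1.2

lemma realize_memF {L : Language} {q : ℕ} {M : Type*} [L.Structure M] (l : LeafInst L q)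
    (side : Fin q → Fin q ⊕ Fin q) (v : Fin q ⊕ Fin q → M) (xs : Fin 1 → M) :
    (memF l side).Realize v xs ↔
      xs 0 ∈ realizeSet L M l.1.2 (fun j => v (side (l.2 j))) := by
  rw [memF, BoundedFormula.realize_relabel]
  rw [realizeSet, Set.mem_setOf_eq, Formula.Realize]
  have hxs : (xs ∘ Fin.natAdd 1 : Fin 0 → M) = default := Subsingleton.elim _ _
  rw [hxs]
  apply Iff.of_eq
  congr 1
  funext u
  cases u with
  | inl u => simp
  | inr j => simp

def sgnF {L : Language} {α : Type*} (ε : Bool) (φ : L.BoundedFormula α 1) :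
    L.BoundedFormula α 1 :=
  if ε then φ else φ.not

def sgnSet {M : Type*} (ε : Bool) (S : Set M) : Set M := if ε then S else Sᶜ

lemma realize_sgnF {L : Language} {q : ℕ} {M : Type*} [L.Structure M] (ε : Bool)
    (φ : L.BoundedFormula (Fin q ⊕ Fin q) 1) (v : Fin q ⊕ Fin q → M) (xs : Fin 1 → M) :
    (sgnF ε φ).Realize v xs ↔ (φ.Realize v xs ↔ ε = true) := by
  cases ε <;> simp [sgnF]

lemma mem_sgnSet {M : Type*} {ε : Bool} {S : Set M} {x : M} :
    x ∈ sgnSet ε S ↔ (x ∈ S ↔ ε = true) := by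
  cases ε <;> simp [sgnSet]

/-- The defining formula: with base leaf `l₀` at parameters `z̄` and sign `ε`
(defining a set `T₀`), and leaf `l` at parameters `ȳ` (defining `A`), asserts
`T₀ ⊆ A ∨ ((T₀ ∩ A) ≠ ∅ ∧ ¬ A ⊆ T₀)`. -/
def Dform {L : Language} {q : ℕ} (l₀ l : LeafInst L q) (ε : Bool) :
    L.Formula (Fin q ⊕ Fin q) :=
  (∀' (sgnF ε (memF l₀ Sum.inr) ⟹ memF l Sum.inl)) ⊔
    ((∃' (sgnF ε (memF l₀ Sum.inr) ⊓ memF l Sum.inl)) ⊓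
      (∀' (memF l Sum.inl ⟹ sgnF ε (memF l₀ Sum.inr))).not)

lemma realize_Dform {L : Language} {q : ℕ} {M : Type*} [L.Structure M]
    (l₀ l : LeafInst L q) (ε : Bool) (b c : Fin q → M) :
    (Dform l₀ l ε).Realize (Sum.elim b c) ↔
      (sgnSet ε (realizeSet L M l₀.1.2 (fun j => c (l₀.2 j))) ⊆
          realizeSet L M l.1.2 (fun j => b (l.2 j)) ∨
        ((sgnSet ε (realizeSet L M l₀.1.2 (fun j => c (l₀.2 j))) ∩
            realizeSet L M l.1.2 (fun j => b (l.2 j))).Nonempty ∧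
          ¬ realizeSet L M l.1.2 (fun j => b (l.2 j)) ⊆
              sgnSet ε (realizeSet L M l₀.1.2 (fun j => c (l₀.2 j))))) := by
  rw [Dform, Formula.Realize]
  simp only [BoundedFormula.realize_sup, BoundedFormula.realize_inf,
    BoundedFormula.realize_all, BoundedFormula.realize_ex, BoundedFormula.realize_imp,
    BoundedFormula.realize_not, realize_sgnF, realize_memF]
  have hsnoc : ∀ x : M, (Fin.snoc (default : Fin 0 → M) x : Fin 1 → M) 0 = x := by
    intro x; simp [Fin.snoc]
  constructor
  · rintro (h | ⟨⟨x, hx⟩, h2⟩)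
    · left; intro x hx
      have := h x
      rw [hsnoc] at this
      exact this (mem_sgnSet.mp hx)
    · refine Or.inr ⟨⟨x, ?_, ?_⟩, ?_⟩
      · rw [hsnoc x] at hx; exact mem_sgnSet.mpr hx.1
      · rw [hsnoc x] at hx; exact hx.2
      · intro hsub
        apply h2
        intro y hy
        rw [hsnoc] at hy ⊢
        exact mem_sgnSet.mp (hsub hy)
  · rintro (h | ⟨⟨x, hx1, hx2⟩, h2⟩)
    · left; intro x hx
      rw [hsnoc] at hx ⊢
      exact h (mem_sgnSet.mpr hx)
    · refine Or.inr ⟨⟨x, ?_⟩, ?_⟩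
      · rw [hsnoc]; exact ⟨mem_sgnSet.mp hx1, hx2⟩
      · intro hall
        apply h2
        intro y hy
        have := hall y
        rw [hsnoc] at this
        exact mem_sgnSet.mpr (this hy)

/-- Extracting the leaf instances of a Boolean combination, together with a
"replacement" operation substituting arbitrary `(ȳ; z̄)`-formulas for the leaves. -/
lemma boolcomb_leaves {L : Language} {q : ℕ}
    {Ψ : Set ((k : ℕ) × L.Formula (Unit ⊕ Fin k))}
    {θ : L.Formula (Unit ⊕ Fin q)} (h : BoolCombOf Ψ q θ) :
    ∃ leaves : List (LeafInst L q), leaves ≠ [] ∧ (∀ l ∈ leaves, l.1 ∈ Ψ) ∧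
      ∀ r : LeafInst L q → L.Formula (Fin q ⊕ Fin q),
        ∃ θ' : L.Formula (Fin q ⊕ Fin q),
          ∀ (M : Type w) [Nonempty M] [L.Structure M] (a : M) (b c : Fin q → M),
            (∀ l ∈ leaves, (r l).Realize (Sum.elim b c) ↔
              (l.1.2).Realize (Sum.elim (fun _ => a) (fun j => b (l.2 j)))) →
            (θ'.Realize (Sum.elim b c) ↔ θ.Realize (Sum.elim (fun _ => a) b)) := by
  induction h with
  | of p hp ρ =>
    refine ⟨[⟨p, ρ⟩], by simp, by simp [hp], fun r => ⟨r ⟨p, ρ⟩, ?_⟩⟩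
    intro M _ _ a b c hr
    rw [hr ⟨p, ρ⟩ (by simp), Formula.realize_relabel]
    apply Iff.of_eq
    congr 1
    funext u
    cases u with
    | inl u => rfl
    | inr j => rfl
  | not h ih =>
    obtain ⟨leaves, hne, hmem, hrep⟩ := ih
    refine ⟨leaves, hne, hmem, fun r => ?_⟩
    obtain ⟨θ', hθ'⟩ := hrep r
    refine ⟨θ'.not, ?_⟩
    intro M _ _ a b c hr
    simp only [Formula.realize_not]
    exact not_congr (hθ' M a b c hr)
  | and h₁ h₂ ih₁ ih₂ =>
    obtain ⟨lv₁, hne₁, hmem₁, hrep₁⟩ := ih₁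
    obtain ⟨lv₂, hne₂, hmem₂, hrep₂⟩ := ih₂
    refine ⟨lv₁ ++ lv₂, by simp [hne₁], ?_, fun r => ?_⟩
    · intro l hl
      rcases List.mem_append.mp hl with hl | hl
      · exact hmem₁ l hl
      · exact hmem₂ l hl
    · obtain ⟨θ₁', hθ₁'⟩ := hrep₁ r
      obtain ⟨θ₂', hθ₂'⟩ := hrep₂ r
      refine ⟨θ₁' ⊓ θ₂', ?_⟩
      intro M _ _ a b c hr
      simp only [Formula.realize_inf]
      exact and_congr
        (hθ₁' M a b c fun l hl => hr l (List.mem_append.mpr (Or.inl hl)))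
        (hθ₂' M a b c fun l hl => hr l (List.mem_append.mpr (Or.inr hl)))
  | or h₁ h₂ ih₁ ih₂ =>
    obtain ⟨lv₁, hne₁, hmem₁, hrep₁⟩ := ih₁
    obtain ⟨lv₂, hne₂, hmem₂, hrep₂⟩ := ih₂
    refine ⟨lv₁ ++ lv₂, by simp [hne₁], ?_, fun r => ?_⟩
    · intro l hl
      rcases List.mem_append.mp hl with hl | hl
      · exact hmem₁ l hl
      · exact hmem₂ l hl
    · obtain ⟨θ₁', hθ₁'⟩ := hrep₁ r
      obtain ⟨θ₂', hθ₂'⟩ := hrep₂ r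
      refine ⟨θ₁' ⊔ θ₂', ?_⟩
      intro M _ _ a b c hr
      simp only [Formula.realize_sup]
      exact or_congr
        (hθ₁' M a b c fun l hl => hr l (List.mem_append.mpr (Or.inl hl)))
        (hθ₂' M a b c fun l hl => hr l (List.mem_append.mpr (Or.inr hl)))

theorem stmt_14 {L : Language} (T : L.Theory) (hcomp : T.IsComplete)
    (hsat : T.IsSatisfiable) (hvc : FullyVCMinimal.{w} L T) :
    ∀ (q : ℕ) (φ : L.Formula (Unit ⊕ Fin q)), UDTFSRankLE.{w} L T φ 1 := by
  classical
  intro q φ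
  obtain ⟨Ψ, hID, hBC⟩ := hvc
  obtain ⟨θ, hθbc, hθeq⟩ := hBC q φ
  obtain ⟨leaves, hne, hmem, hrep⟩ := boolcomb_leaves.{w} hθbc
  have hrep' := fun (l₀ : LeafInst L q) (ε : Bool) => hrep (fun l => Dform l₀ l ε)
  choose Θ hΘspec using hrep'
  set allθ : List (L.Formula (Fin q ⊕ Fin q)) :=
    leaves.flatMap (fun l₀ => [Θ l₀ true, Θ l₀ false]) with hall
  refine ⟨allθ.length,
    fun ℓ => (allθ.get ℓ).relabel (Sum.map id fun j => (((0 : Fin 1), j) : Fin 1 × Fin q)), ?_⟩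
  intro M _ _ hM B hB a
  set av : M := a () with hav
  -- choose a minimal starred set
  set f : LeafInst L q × (Fin q → M) → Set M :=
    fun x => starSet av (realizeSet L M x.1.1.2 (fun j => x.2 (x.1.2 j))) with hf
  set s : Set (LeafInst L q × (Fin q → M)) := {x | x.1 ∈ leaves ∧ x.2 ∈ B} with hs
  have hsfin : s.Finite := by
    apply Set.Finite.subset (Set.Finite.prod leaves.finite_toSet B.finite_toSet)
    intro x hx
    exact ⟨hx.1, hx.2⟩
  have hsne : s.Nonempty := by
    obtain ⟨l₁, hl₁⟩ := List.exists_mem_of_ne_nil leaves hne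
    obtain ⟨c₁, hc₁⟩ := hB
    exact ⟨(l₁, c₁), hl₁, hc₁⟩
  obtain ⟨⟨l₀, cm⟩, ⟨hl₀, hcm⟩, hminim⟩ := Set.Finite.exists_minimalFor f s hsfin hsne
  set S₀ : Set M := realizeSet L M l₀.1.2 (fun j => cm (l₀.2 j)) with hS₀
  set ε : Bool := decide (av ∈ S₀) with hε
  have hT : sgnSet ε S₀ = starSet av S₀ := by
    by_cases h : av ∈ S₀
    · rw [starSet_pos h]
      simp [sgnSet, hε, h]
    · rw [starSet_neg h]
      simp [sgnSet, hε, h]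
  have hmemθ : Θ l₀ ε ∈ allθ := by
    rw [hall, List.mem_flatMap]
    exact ⟨l₀, hl₀, by cases ε <;> simp⟩
  obtain ⟨ℓ, hℓ⟩ := List.get_of_mem hmemθ
  refine ⟨ℓ, fun _ => cm, fun _ => hcm, ?_⟩
  intro b hb
  have hS₀mem : S₀ ∈ {S : Set M | ∃ p ∈ Ψ, ∃ b : Fin p.1 → M, S = realizeSet L M p.2 b} :=
    ⟨l₀.1, hmem l₀ hl₀, fun j => cm (l₀.2 j), rfl⟩
  -- the key hypothesis for the replacement lemma
  have hkey : ∀ l ∈ leaves, (Dform l₀ l ε).Realize (Sum.elim b cm) ↔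
      (l.1.2).Realize (Sum.elim (fun _ => av) (fun j => b (l.2 j))) := by
    intro l hl
    set A : Set M := realizeSet L M l.1.2 (fun j => b (l.2 j)) with hA
    have hAmem : A ∈ {S : Set M | ∃ p ∈ Ψ, ∃ b : Fin p.1 → M, S = realizeSet L M p.2 b} :=
      ⟨l.1, hmem l hl, fun j => b (l.2 j), rfl⟩
    have hpair := starSet_pair av (hID M hM A hAmem S₀ hS₀mem)
    have hmin : starSet av A ⊆ starSet av S₀ → starSet av A = starSet av S₀ :=
      fun h2 => Set.Subset.antisymm h2 (hminim (j := (l, b)) ⟨hl, hb⟩ h2)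
    have hmemA : av ∈ A ↔ (l.1.2).Realize (Sum.elim (fun _ => av) (fun j => b (l.2 j))) :=
      Iff.rfl
    rw [realize_Dform, hT, ← hmemA]
    exact (key_mem (self_mem_starSet av S₀) hpair hmin).symm
  have hΘ := hΘspec l₀ ε M av b cm hkey
  have hrel : ((allθ.get ℓ).relabel
        (Sum.map id fun j => (((0 : Fin 1), j) : Fin 1 × Fin q))).Realize
        (Sum.elim b fun jk : Fin 1 × Fin q => (fun _ => cm) jk.1 jk.2) ↔
      (Θ l₀ ε).Realize (Sum.elim b cm) := by
    rw [hℓ, Formula.realize_relabel]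
    apply Iff.of_eq
    congr 1
    funext u
    cases u with
    | inl u => rfl
    | inr j => rfl
  have hab : (Sum.elim a b : Unit ⊕ Fin q → M) = Sum.elim (fun _ => av) b := by
    funext u
    cases u with
    | inl u => rfl
    | inr j => rfl
  rw [hrel, hΘ, hθeq M hM (Sum.elim a b), hab]
end

section
/- Let T be a complete satisfiable L-theory that is fully VC-minimal. Then T has low VC-density: for every partitioned L-formula φ(x̄; ȳ) there exists K < ω such that for every model M ⊨ T and every finite nonempty B ⊆ M^{lg(ȳ)}, the number of distinct functions from B to {true, false} of the form b̄ ↦ (M ⊨ φ(ā; b̄)) for ā ∈ M^{lg(x̄)} is at most K·|B|^{lg(x̄)}. -/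
open FirstOrder Language

universe w

/-! ### Auxiliary set-theoretic lemmas -/

section setHelpers
variable {X : Type*}

/-- The four-way condition of independence dimension `≤ 1` for a pair of sets. -/
def ID4 (A B : Set X) : Prop := A ∩ B = ∅ ∨ A \ B = ∅ ∨ B \ A = ∅ ∨ (A ∪ B)ᶜ = ∅

lemma id4_iff (A B : Set X) : ID4 A B ↔
    (∀ x, ¬(x ∈ A ∧ x ∈ B)) ∨ (∀ x, ¬(x ∈ A ∧ x ∉ B)) ∨ (∀ x, ¬(x ∈ B ∧ x ∉ A)) ∨
      (∀ x, ¬(x ∉ A ∧ x ∉ B)) := by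
  simp only [ID4, Set.eq_empty_iff_forall_notMem, Set.mem_inter_iff, Set.mem_diff,
    Set.mem_compl_iff, Set.mem_union, not_or]

lemma ID4.compl_left {A B : Set X} (h : ID4 A B) : ID4 Aᶜ B := by
  rw [id4_iff] at h ⊢
  simp only [Set.mem_compl_iff, not_not] at *
  tauto

lemma ID4.compl_right {A B : Set X} (h : ID4 A B) : ID4 A Bᶜ := by
  rw [id4_iff] at h ⊢
  simp only [Set.mem_compl_iff, not_not] at *
  tauto

/-- The symmetric difference of `A` with (the indicator of) the point `s`:
`A` itself if `s ∉ A`, and `Aᶜ` if `s ∈ A`. -/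
def xorSet (A : Set X) (s : X) : Set X := {x | Xor' (x ∈ A) (s ∈ A)}

open Classical in
lemma xorSet_eq (A : Set X) (s : X) : xorSet A s = if s ∈ A then Aᶜ else A := by
  split_ifs with h <;> ext x <;> simp [xorSet, Xor', h, xor_iff_not_iff]

lemma not_mem_xorSet_self (A : Set X) (s : X) : s ∉ xorSet A s := by
  simp [xorSet, Xor']

lemma ID4.xorSet {A B : Set X} (s : X) (h : ID4 A B) : ID4 (xorSet A s) (xorSet B s) := by
  classical
  rw [xorSet_eq, xorSet_eq]
  split_ifs with h1 h2 h2
  · exact (h.compl_left).compl_right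
  · exact h.compl_left
  · exact h.compl_right
  · exact h

lemma exists_min_of_chain {ι : Type*} {S : Finset ι} (hS : S.Nonempty) (A : ι → Set X)
    (hcomp : ∀ i ∈ S, ∀ j ∈ S, A i ⊆ A j ∨ A j ⊆ A i) :
    ∃ i₀ ∈ S, ∀ i ∈ S, A i₀ ⊆ A i := by
  classical
  obtain ⟨m, hm, hmin⟩ := Finset.exists_minimal (hS.image A)
  obtain ⟨i₀, hi₀, rfl⟩ := Finset.mem_image.1 hm
  refine ⟨i₀, hi₀, fun i hi => ?_⟩
  rcases hcomp i₀ hi₀ i hi with h | h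
  · exact h
  · by_cases he : A i = A i₀
    · exact he ▸ subset_rfl
    · exact absurd (lt_of_le_of_ne h he) (fun hlt => hlt.not_ge (hmin (Finset.mem_image_of_mem A hi) hlt.le))

lemma ncard_sigma_le {C : Type*} [Fintype C] {X : C → Type*} [∀ c, Finite (X c)]
    (P : ∀ c, Set (X c)) :
    Set.ncard {x : Σ c, X c | x.2 ∈ P x.1} ≤ ∑ c, (P c).ncard := by
  classical
  have key : ∀ (F : Finset C), Set.ncard {x : Σ c, X c | x.1 ∈ F ∧ x.2 ∈ P x.1}
      ≤ ∑ c ∈ F, (P c).ncard := by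
    intro F
    induction F using Finset.induction with
    | empty => simp
    | insert _ _ hc ih =>
      rename_i c F
      have hsplit : {x : Σ c, X c | x.1 ∈ insert c F ∧ x.2 ∈ P x.1} =
          (Sigma.mk c '' P c) ∪ {x : Σ c, X c | x.1 ∈ F ∧ x.2 ∈ P x.1} := by
        ext ⟨c', g⟩
        simp only [Set.mem_setOf_eq, Finset.mem_insert, Set.mem_union, Set.mem_image]
        constructor
        · rintro ⟨rfl | hF, hg⟩
          · exact Or.inl ⟨g, hg, rfl⟩
          · exact Or.inr ⟨hF, hg⟩
        · rintro (⟨g', hg', he⟩ | ⟨hF, hg⟩)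
          · cases he; exact ⟨Or.inl rfl, hg'⟩
          · exact ⟨Or.inr hF, hg⟩
      rw [hsplit, Finset.sum_insert hc]
      refine le_trans (Set.ncard_union_le _ _) ?_
      exact add_le_add (le_of_eq (Set.ncard_image_of_injective _ sigma_mk_injective)) ih
  have := key Finset.univ
  simpa using this

end setHelpers

/-! ### Extracting atoms from a Boolean combination -/

lemma boolCombOf_atoms {L : Language} {Ψ : Set ((k : ℕ) × L.Formula (Unit ⊕ Fin k))}
    {m : ℕ} {θ : L.Formula (Unit ⊕ Fin m)} (h : BoolCombOf Ψ m θ) :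
    ∃ (s : ℕ) (at_ : Fin s → Σ p : (k : ℕ) × L.Formula (Unit ⊕ Fin k), (Fin p.1 → Fin m))
      (E : (Fin s → Prop) → Prop),
      (∀ i, (at_ i).1 ∈ Ψ) ∧
      ∀ (M : Type w) [L.Structure M] (v : Unit ⊕ Fin m → M),
        θ.Realize v ↔
          E (fun i => (at_ i).1.2.Realize (Sum.elim (v ∘ Sum.inl) (v ∘ Sum.inr ∘ (at_ i).2))) := by
  induction h with
  | of p hp ρ =>
    refine ⟨1, fun _ => ⟨p, ρ⟩, fun g => g 0, fun _ => hp, ?_⟩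
    intro M _ v
    rw [Formula.realize_relabel]
    constructor <;> intro h' <;>
      · convert h' using 2
        funext u
        cases u with
        | inl u => rfl
        | inr i => rfl
  | not h ih =>
    obtain ⟨s, at_, E, hmem, heval⟩ := ih
    exact ⟨s, at_, fun g => ¬ E g, hmem, fun M _ v => by
      rw [Formula.realize_not, heval M v]⟩
  | and h1 h2 ih1 ih2 =>
    obtain ⟨s1, a1, E1, hm1, he1⟩ := ih1
    obtain ⟨s2, a2, E2, hm2, he2⟩ := ih2
    refine ⟨s1 + s2, Fin.append a1 a2,
      fun g => E1 (fun i => g (Fin.castAdd s2 i)) ∧ E2 (fun i => g (Fin.natAdd s1 i)),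
      ?_, ?_⟩
    · intro i
      refine Fin.addCases (motive := fun i => (Fin.append a1 a2 i).1 ∈ Ψ)
        (fun j => ?_) (fun j => ?_) i
      · simpa only [Fin.append_left] using hm1 j
      · simpa only [Fin.append_right] using hm2 j
    · intro M _ v
      rw [Formula.realize_inf, he1 M v, he2 M v]
      have key1 : ∀ i : Fin s1,
          ((Fin.append a1 a2 (Fin.castAdd s2 i)).1.2.Realize
            (Sum.elim (v ∘ Sum.inl) (v ∘ Sum.inr ∘ (Fin.append a1 a2 (Fin.castAdd s2 i)).2)) : Prop)
          = ((a1 i).1.2.Realize (Sum.elim (v ∘ Sum.inl) (v ∘ Sum.inr ∘ (a1 i).2))) := fun i =>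
        congrArg (fun pr : (Σ p : (k : ℕ) × L.Formula (Unit ⊕ Fin k), (Fin p.1 → Fin m)) =>
          (pr.1.2.Realize (Sum.elim (v ∘ Sum.inl) (v ∘ Sum.inr ∘ pr.2)) : Prop))
          (Fin.append_left a1 a2 i)
      have key2 : ∀ i : Fin s2,
          ((Fin.append a1 a2 (Fin.natAdd s1 i)).1.2.Realize
            (Sum.elim (v ∘ Sum.inl) (v ∘ Sum.inr ∘ (Fin.append a1 a2 (Fin.natAdd s1 i)).2)) : Prop)
          = ((a2 i).1.2.Realize (Sum.elim (v ∘ Sum.inl) (v ∘ Sum.inr ∘ (a2 i).2))) := fun i =>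
        congrArg (fun pr : (Σ p : (k : ℕ) × L.Formula (Unit ⊕ Fin k), (Fin p.1 → Fin m)) =>
          (pr.1.2.Realize (Sum.elim (v ∘ Sum.inl) (v ∘ Sum.inr ∘ pr.2)) : Prop))
          (Fin.append_right a1 a2 i)
      simp only [key1, key2]
  | or h1 h2 ih1 ih2 =>
    obtain ⟨s1, a1, E1, hm1, he1⟩ := ih1
    obtain ⟨s2, a2, E2, hm2, he2⟩ := ih2
    refine ⟨s1 + s2, Fin.append a1 a2,
      fun g => E1 (fun i => g (Fin.castAdd s2 i)) ∨ E2 (fun i => g (Fin.natAdd s1 i)),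
      ?_, ?_⟩
    · intro i
      refine Fin.addCases (motive := fun i => (Fin.append a1 a2 i).1 ∈ Ψ)
        (fun j => ?_) (fun j => ?_) i
      · simpa only [Fin.append_left] using hm1 j
      · simpa only [Fin.append_right] using hm2 j
    · intro M _ v
      rw [Formula.realize_sup, he1 M v, he2 M v]
      have key1 : ∀ i : Fin s1,
          ((Fin.append a1 a2 (Fin.castAdd s2 i)).1.2.Realize
            (Sum.elim (v ∘ Sum.inl) (v ∘ Sum.inr ∘ (Fin.append a1 a2 (Fin.castAdd s2 i)).2)) : Prop)
          = ((a1 i).1.2.Realize (Sum.elim (v ∘ Sum.inl) (v ∘ Sum.inr ∘ (a1 i).2))) := fun i =>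
        congrArg (fun pr : (Σ p : (k : ℕ) × L.Formula (Unit ⊕ Fin k), (Fin p.1 → Fin m)) =>
          (pr.1.2.Realize (Sum.elim (v ∘ Sum.inl) (v ∘ Sum.inr ∘ pr.2)) : Prop))
          (Fin.append_left a1 a2 i)
      have key2 : ∀ i : Fin s2,
          ((Fin.append a1 a2 (Fin.natAdd s1 i)).1.2.Realize
            (Sum.elim (v ∘ Sum.inl) (v ∘ Sum.inr ∘ (Fin.append a1 a2 (Fin.natAdd s1 i)).2)) : Prop)
          = ((a2 i).1.2.Realize (Sum.elim (v ∘ Sum.inl) (v ∘ Sum.inr ∘ (a2 i).2))) := fun i =>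
        congrArg (fun pr : (Σ p : (k : ℕ) × L.Formula (Unit ⊕ Fin k), (Fin p.1 → Fin m)) =>
          (pr.1.2.Realize (Sum.elim (v ∘ Sum.inl) (v ∘ Sum.inr ∘ pr.2)) : Prop))
          (Fin.append_right a1 a2 i)
      simp only [key1, key2]

/-! ### Auxiliary formulas -/

namespace VCAux

variable {L : Language} {n q k : ℕ}

/-- variable type for the auxiliary formulas before packing -/
abbrev V (q : ℕ) := Fin 1 ⊕ Fin q ⊕ Fin q

def pack (q : ℕ) : V q → Fin (1 + q + q) :=
  Sum.elim (fun z => Fin.castAdd q (Fin.castAdd q z))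
    (Sum.elim (fun y => Fin.castAdd q (Fin.natAdd 1 y)) (fun y => Fin.natAdd (1 + q) y))

def trip {M : Type w} (star : M) (b₀ b : Fin q → M) : Fin (1 + q + q) → M :=
  Fin.append (Fin.append (fun _ => star) b₀) b

/-- the z-variable (to be interpreted by the base point `star`) -/
def zvar : Fin n ⊕ V q := Sum.inr (Sum.inl 0)

/-- variable assignment embedding `Fin (n+q)` into `Fin n ⊕ V q`, using the second
copy of `Fin q` (the "b" copy). -/
def etaB (ρ : Fin k → Fin (n + q)) : Fin k → Fin n ⊕ V q := fun i =>
  Sum.elim (fun s => Sum.inl s) (fun y => Sum.inr (Sum.inr (Sum.inr y)))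
    (finSumFinEquiv.symm (ρ i))

/-- same, using the first copy of `Fin q` (the "b₀" copy). -/
def eta0 (ρ : Fin k → Fin (n + q)) : Fin k → Fin n ⊕ V q := fun i =>
  Sum.elim (fun s => Sum.inl s) (fun y => Sum.inr (Sum.inr (Sum.inl y)))
    (finSumFinEquiv.symm (ρ i))

/-- atoms with the object variable as the bound variable 0 -/
def atomB (ψ : L.Formula (Unit ⊕ Fin k)) (η : Fin k → Fin n ⊕ V q) :
    L.BoundedFormula (Fin n ⊕ V q) 1 :=
  BoundedFormula.relabel
    (Sum.elim (fun _ : Unit => Sum.inr (0 : Fin 1)) (fun i => Sum.inl (η i))) ψ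

/-- atoms with the object variable interpreted by the z-variable -/
def atomZ (ψ : L.Formula (Unit ⊕ Fin k)) (η : Fin k → Fin n ⊕ V q) :
    L.BoundedFormula (Fin n ⊕ V q) 1 :=
  BoundedFormula.relabel
    (Sum.elim (fun _ : Unit => (Sum.inl zvar : (Fin n ⊕ V q) ⊕ Fin 1))
      (fun i => Sum.inl (η i))) ψ

def xorB (φ₁ φ₂ : L.BoundedFormula (Fin n ⊕ V q) 1) : L.BoundedFormula (Fin n ⊕ V q) 1 :=
  (φ₁.iff φ₂).not

def muF (ψ : L.Formula (Unit ⊕ Fin k)) (ρ : Fin k → Fin (n + q)) :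
    L.Formula (Fin n ⊕ Fin (1 + q + q)) :=
  (ψ.relabel (Sum.elim (fun _ : Unit => zvar) (etaB ρ))).relabel (Sum.map id (pack q))

def gaF {k₀ : ℕ} (ψ₀ : L.Formula (Unit ⊕ Fin k₀)) (ρ₀ : Fin k₀ → Fin (n + q))
    (ψ : L.Formula (Unit ⊕ Fin k)) (ρ : Fin k → Fin (n + q)) :
    L.Formula (Fin n ⊕ Fin (1 + q + q)) :=
  Formula.relabel (Sum.map id (pack q))
    (((xorB (atomB ψ₀ (eta0 ρ₀)) (atomZ ψ₀ (eta0 ρ₀))).imp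
      (xorB (atomB ψ (etaB ρ)) (atomZ ψ (etaB ρ)))).all)

variable {M : Type w} [L.Structure M]

lemma etaB_val (ρ : Fin k → Fin (n + q)) (aa : Fin n → M) (star : M) (b₀ b : Fin q → M)
    (i : Fin k) :
    Sum.elim aa (trip star b₀ b) (Sum.map id (pack q) (Sum.elim (fun _ : Unit => zvar)
      (etaB ρ) (Sum.inr i))) = Fin.append aa b (ρ i) := by
  simp only [Sum.elim_inr, etaB]
  rcases h : finSumFinEquiv.symm (ρ i) with s | y
  · have : ρ i = Fin.castAdd q s := by
      rw [Equiv.symm_apply_eq] at h; rw [h, finSumFinEquiv_apply_left]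
    rw [this]
    simp [Fin.append_left]
  · have : ρ i = Fin.natAdd n y := by
      rw [Equiv.symm_apply_eq] at h; rw [h, finSumFinEquiv_apply_right]
    rw [this]
    simp [Sum.map, pack, trip, Fin.append_right]

lemma eta0_val (ρ : Fin k → Fin (n + q)) (aa : Fin n → M) (star : M) (b₀ b : Fin q → M)
    (i : Fin k) :
    Sum.elim aa (trip star b₀ b) (Sum.map id (pack q) (Sum.elim (fun _ : Unit => zvar)
      (eta0 ρ) (Sum.inr i))) = Fin.append aa b₀ (ρ i) := by
  simp only [Sum.elim_inr, eta0]
  rcases h : finSumFinEquiv.symm (ρ i) with s | y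
  · have : ρ i = Fin.castAdd q s := by
      rw [Equiv.symm_apply_eq] at h; rw [h, finSumFinEquiv_apply_left]
    rw [this]
    simp [Fin.append_left]
  · have : ρ i = Fin.natAdd n y := by
      rw [Equiv.symm_apply_eq] at h; rw [h, finSumFinEquiv_apply_right]
    rw [this]
    simp [Sum.map, pack, trip, Fin.append_left, Fin.append_right]

lemma zvar_val (aa : Fin n → M) (star : M) (b₀ b : Fin q → M) :
    Sum.elim aa (trip star b₀ b) (Sum.map id (pack q) (zvar : Fin n ⊕ V q)) = star := by
  simp [zvar, pack, trip, Fin.append_left]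

lemma realize_muF (ψ : L.Formula (Unit ⊕ Fin k)) (ρ : Fin k → Fin (n + q))
    (aa : Fin n → M) (star : M) (b₀ b : Fin q → M) :
    (muF ψ ρ).Realize (Sum.elim aa (trip star b₀ b)) ↔
      ψ.Realize (Sum.elim (fun _ => star) (Fin.append aa b ∘ ρ)) := by
  rw [muF, Formula.realize_relabel, Formula.realize_relabel]
  constructor <;> intro h <;> (convert h using 2; funext u; rcases u with u | i)
  · exact (zvar_val aa star b₀ b).symm
  · exact (etaB_val ρ aa star b₀ b i).symm
  · exact zvar_val aa star b₀ b
  · exact etaB_val ρ aa star b₀ b i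

lemma realize_atomB_etaB (ψ : L.Formula (Unit ⊕ Fin k)) (ρ : Fin k → Fin (n + q))
    (aa : Fin n → M) (star : M) (b₀ b : Fin q → M) (xs : Fin (1 + 0) → M) :
    (atomB ψ (etaB ρ)).Realize (Sum.elim aa (trip star b₀ b) ∘ Sum.map id (pack q)) xs ↔
      ψ.Realize (Sum.elim (fun _ => xs 0) (Fin.append aa b ∘ ρ)) := by
  rw [atomB, BoundedFormula.realize_relabel]
  have h1 : (Sum.elim (Sum.elim aa (trip star b₀ b) ∘ Sum.map id (pack q))
      (xs ∘ Fin.castAdd 0) ∘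
      (Sum.elim (fun _ : Unit => Sum.inr (0 : Fin 1)) (fun i => Sum.inl (etaB ρ i))))
      = Sum.elim (fun _ => xs 0) (Fin.append aa b ∘ ρ) := by
    funext u
    rcases u with u | i
    · rfl
    · simpa using etaB_val ρ aa star b₀ b i
  rw [h1]
  exact iff_of_eq (congrArg (BoundedFormula.Realize ψ _) (Subsingleton.elim _ _))

lemma realize_atomB_eta0 (ψ : L.Formula (Unit ⊕ Fin k)) (ρ : Fin k → Fin (n + q))
    (aa : Fin n → M) (star : M) (b₀ b : Fin q → M) (xs : Fin (1 + 0) → M) :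
    (atomB ψ (eta0 ρ)).Realize (Sum.elim aa (trip star b₀ b) ∘ Sum.map id (pack q)) xs ↔
      ψ.Realize (Sum.elim (fun _ => xs 0) (Fin.append aa b₀ ∘ ρ)) := by
  rw [atomB, BoundedFormula.realize_relabel]
  have h1 : (Sum.elim (Sum.elim aa (trip star b₀ b) ∘ Sum.map id (pack q))
      (xs ∘ Fin.castAdd 0) ∘
      (Sum.elim (fun _ : Unit => Sum.inr (0 : Fin 1)) (fun i => Sum.inl (eta0 ρ i))))
      = Sum.elim (fun _ => xs 0) (Fin.append aa b₀ ∘ ρ) := by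
    funext u
    rcases u with u | i
    · rfl
    · simpa using eta0_val ρ aa star b₀ b i
  rw [h1]
  exact iff_of_eq (congrArg (BoundedFormula.Realize ψ _) (Subsingleton.elim _ _))

lemma realize_atomZ_etaB (ψ : L.Formula (Unit ⊕ Fin k)) (ρ : Fin k → Fin (n + q))
    (aa : Fin n → M) (star : M) (b₀ b : Fin q → M) (xs : Fin (1 + 0) → M) :
    (atomZ ψ (etaB ρ)).Realize (Sum.elim aa (trip star b₀ b) ∘ Sum.map id (pack q)) xs ↔
      ψ.Realize (Sum.elim (fun _ => star) (Fin.append aa b ∘ ρ)) := by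
  rw [atomZ, BoundedFormula.realize_relabel]
  have h1 : (Sum.elim (Sum.elim aa (trip star b₀ b) ∘ Sum.map id (pack q))
      (xs ∘ Fin.castAdd 0) ∘
      (Sum.elim (fun _ : Unit => (Sum.inl zvar : (Fin n ⊕ V q) ⊕ Fin 1))
        (fun i => Sum.inl (etaB ρ i))))
      = Sum.elim (fun _ => star) (Fin.append aa b ∘ ρ) := by
    funext u
    rcases u with u | i
    · simpa using zvar_val aa star b₀ b
    · simpa using etaB_val ρ aa star b₀ b i
  rw [h1]
  exact iff_of_eq (congrArg (BoundedFormula.Realize ψ _) (Subsingleton.elim _ _))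

lemma realize_atomZ_eta0 (ψ : L.Formula (Unit ⊕ Fin k)) (ρ : Fin k → Fin (n + q))
    (aa : Fin n → M) (star : M) (b₀ b : Fin q → M) (xs : Fin (1 + 0) → M) :
    (atomZ ψ (eta0 ρ)).Realize (Sum.elim aa (trip star b₀ b) ∘ Sum.map id (pack q)) xs ↔
      ψ.Realize (Sum.elim (fun _ => star) (Fin.append aa b₀ ∘ ρ)) := by
  rw [atomZ, BoundedFormula.realize_relabel]
  have h1 : (Sum.elim (Sum.elim aa (trip star b₀ b) ∘ Sum.map id (pack q))
      (xs ∘ Fin.castAdd 0) ∘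
      (Sum.elim (fun _ : Unit => (Sum.inl zvar : (Fin n ⊕ V q) ⊕ Fin 1))
        (fun i => Sum.inl (eta0 ρ i))))
      = Sum.elim (fun _ => star) (Fin.append aa b₀ ∘ ρ) := by
    funext u
    rcases u with u | i
    · simpa using zvar_val aa star b₀ b
    · simpa using eta0_val ρ aa star b₀ b i
  rw [h1]
  exact iff_of_eq (congrArg (BoundedFormula.Realize ψ _) (Subsingleton.elim _ _))

lemma realize_gaF {k₀ : ℕ} (ψ₀ : L.Formula (Unit ⊕ Fin k₀)) (ρ₀ : Fin k₀ → Fin (n + q))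
    (ψ : L.Formula (Unit ⊕ Fin k)) (ρ : Fin k → Fin (n + q))
    (aa : Fin n → M) (star : M) (b₀ b : Fin q → M) :
    (gaF ψ₀ ρ₀ ψ ρ).Realize (Sum.elim aa (trip star b₀ b)) ↔
      ∀ x : M,
        Xor' (ψ₀.Realize (Sum.elim (fun _ => x) (Fin.append aa b₀ ∘ ρ₀)))
            (ψ₀.Realize (Sum.elim (fun _ => star) (Fin.append aa b₀ ∘ ρ₀))) →
        Xor' (ψ.Realize (Sum.elim (fun _ => x) (Fin.append aa b ∘ ρ)))
            (ψ.Realize (Sum.elim (fun _ => star) (Fin.append aa b ∘ ρ))) := by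
  rw [gaF, Formula.realize_relabel]
  show BoundedFormula.Realize _ _ _ ↔ _
  rw [BoundedFormula.realize_all]
  refine forall_congr' fun x => ?_
  rw [BoundedFormula.realize_imp, xorB, xorB, BoundedFormula.realize_not,
    BoundedFormula.realize_not, BoundedFormula.realize_iff, BoundedFormula.realize_iff,
    realize_atomB_eta0, realize_atomZ_eta0, realize_atomB_etaB, realize_atomZ_etaB]
  have hsnoc : (Fin.snoc (default : Fin 0 → M) x : Fin (0+1) → M) 0 = x := by
    have h0 : (0 : Fin (0+1)) = Fin.last 0 := rfl
    rw [h0, Fin.snoc_last]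
  rw [hsnoc]; simp only [Xor', xor_iff_not_iff]

end VCAux
set_option maxHeartbeats 2000000 in
open VCAux in
theorem typeCount {L : Language} (T : L.Theory)
    (Ψ : Set ((k : ℕ) × L.Formula (Unit ⊕ Fin k)))
    (hΨ1 : ∀ (M : Type w) [Nonempty M] [L.Structure M], M ⊨ T →
      IndepDimLEOne {S : Set M | ∃ p ∈ Ψ, ∃ b : Fin p.1 → M, S = realizeSet L M p.2 b})
    (hΨ2 : ∀ (m : ℕ) (φ : L.Formula (Unit ⊕ Fin m)),
      ∃ θ : L.Formula (Unit ⊕ Fin m), BoolCombOf Ψ m θ ∧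
        ∀ (M : Type w) [Nonempty M] [L.Structure M], M ⊨ T →
          ∀ v : Unit ⊕ Fin m → M, φ.Realize v ↔ θ.Realize v) :
    ∀ (n q : ℕ) (ι : Type) [Fintype ι] (δ : ι → L.Formula (Fin n ⊕ Fin q)),
      ∃ K : ℕ, ∀ (M : Type w) [Nonempty M] [L.Structure M], M ⊨ T →
        ∀ B : Finset (Fin q → M), B.Nonempty →
          Set.ncard {t : ι × {b // b ∈ B} → Prop |
              ∃ a : Fin n → M, ∀ ib : ι × {b // b ∈ B},
                t ib ↔ (δ ib.1).Realize (Sum.elim a ib.2.1)}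
            ≤ K * B.card ^ n := by
  intro n
  induction n with
  | zero =>
    intro q ι _ δ
    refine ⟨1, ?_⟩
    intro M _ _ hM B hB
    have hsub : {t : ι × {b // b ∈ B} → Prop |
        ∃ a : Fin 0 → M, ∀ ib : ι × {b // b ∈ B},
          t ib ↔ (δ ib.1).Realize (Sum.elim a ib.2.1)} ⊆
        {fun ib : ι × {b // b ∈ B} =>
          (δ ib.1).Realize (Sum.elim (default : Fin 0 → M) ib.2.1)} := by
      rintro t ⟨a, ha⟩
      have ha0 : a = default := Subsingleton.elim _ _
      subst ha0
      refine Set.mem_singleton_iff.2 ?_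
      funext ib
      exact propext (ha ib)
    calc Set.ncard _ ≤ Set.ncard {fun ib : ι × {b // b ∈ B} =>
          (δ ib.1).Realize (Sum.elim (default : Fin 0 → M) ib.2.1)} :=
          Set.ncard_le_ncard hsub (Set.finite_singleton _)
      _ = 1 := Set.ncard_singleton _
      _ ≤ 1 * B.card ^ 0 := by simp
  | succ n IH =>
    intro q ι _ δ
    classical
    -- single-variable reading of each δ i
    set rmap : (Fin (n+1) ⊕ Fin q) → (Unit ⊕ Fin (n + q)) :=
      Sum.elim (fun x => Fin.cases (Sum.inl ()) (fun j => Sum.inr (Fin.castAdd q j)) x)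
        (fun y => Sum.inr (Fin.natAdd n y)) with hrmap
    set χ : ι → L.Formula (Unit ⊕ Fin (n + q)) := fun i => (δ i).relabel rmap with hχdef
    choose θ hbc hθeq using fun i => hΨ2 (n + q) (χ i)
    have hatoms : ∀ i : ι, ∃ (s : ℕ)
        (at_ : Fin s → Σ p : (k : ℕ) × L.Formula (Unit ⊕ Fin k), (Fin p.1 → Fin (n + q)))
        (E : (Fin s → Prop) → Prop),
        (∀ i', (at_ i').1 ∈ Ψ) ∧
        ∀ (M : Type w) [L.Structure M] (v : Unit ⊕ Fin (n + q) → M),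
          (θ i).Realize v ↔
            E (fun i' => (at_ i').1.2.Realize
              (Sum.elim (v ∘ Sum.inl) (v ∘ Sum.inr ∘ (at_ i').2))) :=
      fun i => boolCombOf_atoms (hbc i)
    choose s atm E hmem heval using hatoms
    -- the index type of all atoms
    set J := Σ i : ι, Fin (s i) with hJ
    set ψf : ∀ j : J, L.Formula (Unit ⊕ Fin ((atm j.1 j.2).1.1)) := fun j => (atm j.1 j.2).1.2
      with hψf
    set ρf : ∀ j : J, Fin ((atm j.1 j.2).1.1) → Fin (n + q) := fun j => (atm j.1 j.2).2 with hρf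
    -- the auxiliary formulas, for the inductive hypothesis
    set δ' : ((J × J) ⊕ J) → L.Formula (Fin n ⊕ Fin (1 + q + q)) :=
      Sum.elim (fun jj => gaF (ψf jj.1) (ρf jj.1) (ψf jj.2) (ρf jj.2))
        (fun j => muF (ψf j) (ρf j)) with hδ'
    obtain ⟨K', hK'⟩ := IH (1 + q + q) ((J × J) ⊕ J) δ'
    refine ⟨(1 + Fintype.card J) * K', ?_⟩
    intro M _ _ hM B hB
    set star : M := Classical.arbitrary M with hstar
    -- translation between δ and χ
    have hχR : ∀ (i : ι) (a : Fin (n+1) → M) (b : Fin q → M),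
        (δ i).Realize (Sum.elim a b) ↔
          (χ i).Realize (Sum.elim (fun _ => a 0) (Fin.append (a ∘ Fin.succ) b)) := by
      intro i a b
      rw [hχdef]
      rw [Formula.realize_relabel]
      refine iff_of_eq (congrArg (δ i).Realize ?_)
      funext u
      rcases u with x | y
      · refine Fin.cases ?_ (fun j => ?_) x
        · simp [hrmap]
        · simp [hrmap, Fin.append_left]
      · simp [hrmap, Fin.append_right]
    -- the parameter finsets for the inductive hypothesis
    set b₀fun : Option (J × {b // b ∈ B}) → (Fin q → M) := fun c =>
      Option.elim c hB.choose (fun jb => jb.2.1) with hb₀fun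
    set Btil : Option (J × {b // b ∈ B}) → Finset (Fin (1 + q + q) → M) := fun c =>
      B.image (fun b => trip star (b₀fun c) b) with hBtil
    have hBtilmem : ∀ (c) (b : {b // b ∈ B}), trip star (b₀fun c) b.1 ∈ Btil c := fun c b =>
      Finset.mem_image_of_mem _ b.2
    -- the pattern sets given by the inductive hypothesis
    set Pc : ∀ c : Option (J × {b // b ∈ B}),
        Set ((((J × J) ⊕ J) × {p // p ∈ Btil c}) → Prop) := fun c =>
      {g | ∃ a : Fin n → M, ∀ ip, g ip ↔ (δ' ip.1).Realize (Sum.elim a ip.2.1)} with hPc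
    have hPcle : ∀ c, (Pc c).ncard ≤ K' * B.card ^ n := by
      intro c
      refine le_trans (hK' M hM (Btil c) (hB.image _)) ?_
      have : (Btil c).card ≤ B.card := Finset.card_image_le
      exact Nat.mul_le_mul_left _ (Nat.pow_le_pow_left this n)
    -- decoding maps
    set decodeT : (Σ c : Option (J × {b // b ∈ B}),
        (((J × J) ⊕ J) × {p // p ∈ Btil c}) → Prop) → ((J × {b // b ∈ B}) → Prop) :=
      fun x jb =>
        match x with
        | ⟨none, g⟩ => g (Sum.inr jb.1, ⟨trip star (b₀fun none) jb.2.1, hBtilmem none jb.2⟩)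
        | ⟨some i₀, g⟩ =>
            Xor' (g (Sum.inl (i₀.1, jb.1),
                ⟨trip star (b₀fun (some i₀)) jb.2.1, hBtilmem (some i₀) jb.2⟩))
              (g (Sum.inr jb.1,
                ⟨trip star (b₀fun (some i₀)) jb.2.1, hBtilmem (some i₀) jb.2⟩))
      with hdecodeT
    set decodeF : ((J × {b // b ∈ B}) → Prop) → ((ι × {b // b ∈ B}) → Prop) :=
      fun t ib => E ib.1 (fun s_ => t (⟨ib.1, s_⟩, ib.2)) with hdecodeF
    set St : Set ((J × {b // b ∈ B}) → Prop) := {t | ∃ a : Fin (n+1) → M,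
        ∀ jb : J × {b // b ∈ B}, t jb ↔ (ψf jb.1).Realize
          (Sum.elim (fun _ => a 0) ((Fin.append (a ∘ Fin.succ) jb.2.1) ∘ ρf jb.1))} with hSt
    set D : Set (Σ c : Option (J × {b // b ∈ B}),
        (((J × J) ⊕ J) × {p // p ∈ Btil c}) → Prop) := {x | x.2 ∈ Pc x.1} with hD
    -- Inclusion 1 : the goal set is covered by decodeF applied to St
    have hinc1 : {t : ι × {b // b ∈ B} → Prop |
        ∃ a : Fin (n+1) → M, ∀ ib : ι × {b // b ∈ B},
          t ib ↔ (δ ib.1).Realize (Sum.elim a ib.2.1)} ⊆ decodeF '' St := by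
      rintro f ⟨a, ha⟩
      set t : (J × {b // b ∈ B}) → Prop := fun jb => (ψf jb.1).Realize
        (Sum.elim (fun _ => a 0) ((Fin.append (a ∘ Fin.succ) jb.2.1) ∘ ρf jb.1)) with ht
      refine ⟨t, ⟨a, fun jb => Iff.rfl⟩, ?_⟩
      funext ib
      refine propext ?_
      have h1 : f ib ↔ (θ ib.1).Realize
          (Sum.elim (fun _ => a 0) (Fin.append (a ∘ Fin.succ) ib.2.1)) :=
        (ha ib).trans ((hχR ib.1 a ib.2.1).trans
          (hθeq ib.1 M hM (Sum.elim (fun _ => a 0) (Fin.append (a ∘ Fin.succ) ib.2.1))))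
      have h2 := heval ib.1 M (Sum.elim (fun _ => a 0) (Fin.append (a ∘ Fin.succ) ib.2.1))
      exact (h1.trans h2).symm
    -- Inclusion 2 : St is covered by decodeT applied to D
    have hinc2 : St ⊆ decodeT '' D := by
      rintro t ⟨a, ha⟩
      set aa : Fin n → M := a ∘ Fin.succ with haa
      set Aset : (J × {b // b ∈ B}) → Set M := fun jb =>
        realizeSet L M (ψf jb.1) ((Fin.append aa jb.2.1) ∘ ρf jb.1) with hAset
      have hta : ∀ jb, t jb ↔ a 0 ∈ Aset jb := fun jb => ha jb
      have hID : ∀ jb jb', ID4 (Aset jb) (Aset jb') := by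
        intro jb jb'
        exact hΨ1 M hM _ ⟨(atm jb.1.1 jb.1.2).1, hmem jb.1.1 jb.1.2, _, rfl⟩
          _ ⟨(atm jb'.1.1 jb'.1.2).1, hmem jb'.1.1 jb'.1.2, _, rfl⟩
      set A2 : (J × {b // b ∈ B}) → Set M := fun jb => xorSet (Aset jb) star with hA2
      have hstar2 : ∀ jb, star ∉ A2 jb := fun jb => not_mem_xorSet_self _ _
      set Sfin : Finset (J × {b // b ∈ B}) := Finset.univ.filter (fun jb => a 0 ∈ A2 jb)
        with hSfin
      have hcomp : ∀ jb ∈ Sfin, ∀ jb' ∈ Sfin, A2 jb ⊆ A2 jb' ∨ A2 jb' ⊆ A2 jb := by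
        intro jb hjb jb' hjb'
        have h1 : a 0 ∈ A2 jb := (Finset.mem_filter.1 hjb).2
        have h2 : a 0 ∈ A2 jb' := (Finset.mem_filter.1 hjb').2
        rcases (hID jb jb').xorSet star with h | h | h | h
        · exact absurd (Set.eq_empty_iff_forall_notMem.1 h (a 0)) (by simp [h1, h2]; exact ⟨h1, h2⟩)
        · exact Or.inl (Set.diff_eq_empty.1 h)
        · exact Or.inr (Set.diff_eq_empty.1 h)
        · exact absurd (Set.eq_empty_iff_forall_notMem.1 h star)
            (by simp [hstar2 jb, hstar2 jb']; exact ⟨hstar2 jb, hstar2 jb'⟩)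
      -- the mask values
      have hmu : ∀ (c : Option (J × {b // b ∈ B})) (jb : J × {b // b ∈ B}),
          (δ' (Sum.inr jb.1)).Realize
            (Sum.elim aa (trip star (b₀fun c) jb.2.1)) ↔ star ∈ Aset jb := by
        intro c jb
        have : (δ' (Sum.inr jb.1)) = muF (ψf jb.1) (ρf jb.1) := by rw [hδ']; rfl
        rw [this, realize_muF]
        exact Iff.rfl
      by_cases hSne : Sfin.Nonempty
      · -- nonempty case : there is a minimal element
        obtain ⟨i₀, hi₀S, hmin⟩ := exists_min_of_chain hSne A2 hcomp
        have hi₀mem : a 0 ∈ A2 i₀ := (Finset.mem_filter.1 hi₀S).2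
        set g : ((((J × J) ⊕ J) × {p // p ∈ Btil (some i₀)}) → Prop) := fun ip =>
          (δ' ip.1).Realize (Sum.elim aa ip.2.1) with hg
        refine ⟨⟨some i₀, g⟩, ⟨aa, fun ip => Iff.rfl⟩, ?_⟩
        funext jb
        refine propext (Iff.symm ?_)
        have hb₀ : b₀fun (some i₀) = i₀.2.1 := rfl
        have hga : g (Sum.inl (i₀.1, jb.1),
            ⟨trip star (b₀fun (some i₀)) jb.2.1, hBtilmem (some i₀) jb.2⟩) ↔
            (A2 i₀ ⊆ A2 jb) := by
          have hform : (δ' (Sum.inl (i₀.1, jb.1)))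
              = gaF (ψf i₀.1) (ρf i₀.1) (ψf jb.1) (ρf jb.1) := by rw [hδ']; rfl
          rw [hg]
          show (δ' (Sum.inl (i₀.1, jb.1))).Realize
            (Sum.elim aa (trip star (b₀fun (some i₀)) jb.2.1)) ↔ _
          rw [hform, hb₀, realize_gaF]
          constructor
          · intro h x hx
            exact h x hx
          · intro h x hx
            exact h hx
        have hmucur : g (Sum.inr jb.1,
            ⟨trip star (b₀fun (some i₀)) jb.2.1, hBtilmem (some i₀) jb.2⟩) ↔
            star ∈ Aset jb := hmu (some i₀) jb
        have hsub_iff : (A2 i₀ ⊆ A2 jb) ↔ a 0 ∈ A2 jb := by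
          constructor
          · intro h
            exact h hi₀mem
          · intro h
            exact hmin jb (Finset.mem_filter.2 ⟨Finset.mem_univ _, h⟩)
        rw [hdecodeT]
        show t jb ↔ Xor'
          (g (Sum.inl (i₀.1, jb.1),
            ⟨trip star (b₀fun (some i₀)) jb.2.1, hBtilmem (some i₀) jb.2⟩))
          (g (Sum.inr jb.1,
            ⟨trip star (b₀fun (some i₀)) jb.2.1, hBtilmem (some i₀) jb.2⟩))
        rw [hta jb, propext hga, propext hmucur, propext hsub_iff]
        have hA2m : (a 0 ∈ A2 jb) = Xor' (a 0 ∈ Aset jb) (star ∈ Aset jb) := rfl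
        rw [hA2m]
        generalize (a 0 ∈ Aset jb) = P
        generalize (star ∈ Aset jb) = S
        unfold Xor' Xor
        tauto
      · -- empty case
        have hempty : ∀ jb, a 0 ∉ A2 jb := by
          intro jb hc
          exact hSne ⟨jb, Finset.mem_filter.2 ⟨Finset.mem_univ _, hc⟩⟩
        set g : ((((J × J) ⊕ J) × {p // p ∈ Btil none}) → Prop) := fun ip =>
          (δ' ip.1).Realize (Sum.elim aa ip.2.1) with hg
        refine ⟨⟨none, g⟩, ⟨aa, fun ip => Iff.rfl⟩, ?_⟩
        funext jb
        refine propext (Iff.symm ?_)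
        have hmucur : g (Sum.inr jb.1,
            ⟨trip star (b₀fun none) jb.2.1, hBtilmem none jb.2⟩) ↔
            star ∈ Aset jb := hmu none jb
        rw [hdecodeT]
        show t jb ↔ g (Sum.inr jb.1,
          ⟨trip star (b₀fun none) jb.2.1, hBtilmem none jb.2⟩)
        rw [hta jb, propext hmucur]
        have hiff : (a 0 ∈ Aset jb) ↔ (star ∈ Aset jb) := by
          have := hempty jb
          rw [hA2] at this
          simp only [xorSet, Xor', Xor, Set.mem_setOf_eq, not_or, not_and, not_not] at this
          exact ⟨this.1, this.2⟩
        exact hiff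
    -- counting
    have hcount1 : Set.ncard {t : ι × {b // b ∈ B} → Prop |
        ∃ a : Fin (n+1) → M, ∀ ib : ι × {b // b ∈ B},
          t ib ↔ (δ ib.1).Realize (Sum.elim a ib.2.1)} ≤ St.ncard :=
      le_trans (Set.ncard_le_ncard hinc1 ((Set.toFinite St).image _))
        (Set.ncard_image_le (Set.toFinite St))
    have hcount2 : St.ncard ≤ D.ncard :=
      le_trans (Set.ncard_le_ncard hinc2 ((Set.toFinite D).image _))
        (Set.ncard_image_le (Set.toFinite D))
    have hcount3 : D.ncard ≤ ∑ c : Option (J × {b // b ∈ B}), (Pc c).ncard :=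
      ncard_sigma_le Pc
    have hcount4 : ∑ c : Option (J × {b // b ∈ B}), (Pc c).ncard
        ≤ (Fintype.card J * B.card + 1) * (K' * B.card ^ n) := by
      refine le_trans (Finset.sum_le_card_nsmul _ _ (K' * B.card ^ n)
        (fun c _ => hPcle c)) ?_
      simp only [smul_eq_mul, Finset.card_univ]
      have hcard : Fintype.card (Option (J × {b // b ∈ B})) =
          Fintype.card J * B.card + 1 := by
        rw [Fintype.card_option, Fintype.card_prod, Fintype.card_coe]
      rw [hcard]
    have harith : (Fintype.card J * B.card + 1) * (K' * B.card ^ n)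
        ≤ ((1 + Fintype.card J) * K') * B.card ^ (n + 1) := by
      have hb1 : 1 ≤ B.card := Finset.card_pos.2 hB
      calc (Fintype.card J * B.card + 1) * (K' * B.card ^ n)
          ≤ ((1 + Fintype.card J) * B.card) * (K' * B.card ^ n) := by
            refine Nat.mul_le_mul_right _ ?_
            nlinarith
        _ = ((1 + Fintype.card J) * K') * B.card ^ (n + 1) := by ring
    exact le_trans hcount1 (le_trans hcount2 (le_trans hcount3
      (le_trans hcount4 harith)))

theorem stmt_15 {L : Language} (T : L.Theory) (hcomp : T.IsComplete)
    (hsat : T.IsSatisfiable) (hvc : FullyVCMinimal.{w} L T) :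
    ∀ (n q : ℕ) (φ : L.Formula (Fin n ⊕ Fin q)), ∃ K : ℕ,
      ∀ (M : Type w) [Nonempty M] [L.Structure M], M ⊨ T →
        ∀ B : Finset (Fin q → M), B.Nonempty →
          Set.ncard {f : {b // b ∈ B} → Prop |
              ∃ a : Fin n → M, ∀ b : {b // b ∈ B}, f b ↔ φ.Realize (Sum.elim a b.1)}
            ≤ K * B.card ^ n := by
  obtain ⟨Ψ, hΨ1, hΨ2⟩ := hvc
  intro n q φ
  obtain ⟨K, hK⟩ := typeCount T Ψ hΨ1 hΨ2 n q (Fin 1) (fun _ => φ)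
  refine ⟨K, ?_⟩
  intro M _ _ hM B hB
  have hsub : {f : {b // b ∈ B} → Prop |
      ∃ a : Fin n → M, ∀ b : {b // b ∈ B}, f b ↔ φ.Realize (Sum.elim a b.1)} ⊆
      (fun t : (Fin 1 × {b // b ∈ B}) → Prop => fun b : {b // b ∈ B} => t (0, b)) ''
        {t : Fin 1 × {b // b ∈ B} → Prop | ∃ a : Fin n → M, ∀ ib : Fin 1 × {b // b ∈ B},
          t ib ↔ ((fun _ : Fin 1 => φ) ib.1).Realize (Sum.elim a ib.2.1)} := by
    rintro f ⟨a, ha⟩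
    exact ⟨fun ib => f ib.2, ⟨a, fun ib => ha ib.2⟩, rfl⟩
  refine le_trans (Set.ncard_le_ncard hsub (Set.Finite.image _ (Set.toFinite _))) ?_
  refine le_trans (Set.ncard_image_le (Set.toFinite _)) ?_
  exact hK M hM B hB
end

section
/- Let L be a language containing a binary relation symbol < and let T be a complete satisfiable L-theory that is weakly o-minimal. Then T is fully VC-minimal. -/
open FirstOrder Language

universe w

/-- `S` is convex with respect to the strict order `r`. -/
def IsRConvex {X : Type*} (r : X → X → Prop) (S : Set X) : Prop :=
  ∀ a b c : X, r a b → r b c → a ∈ S → c ∈ S → b ∈ S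

/-- `S` is a union of at most `K` `r`-convex subsets of `X`. -/
def UnionOfAtMostConvex {X : Type*} (r : X → X → Prop) (K : ℕ) (S : Set X) : Prop :=
  ∃ C : Fin K → Set X, (∀ i, IsRConvex r (C i)) ∧ S = ⋃ i, C i

/-- `T` is weakly o-minimal (with respect to the binary relation symbol `lt` of `L`):
in every model `M ⊨ T`, `lt` defines a linear order on `M` and every parametrically
definable subset of `M` is a finite union of `lt`-convex sets. -/
def WeaklyOMinimal (L : Language) (lt : L.Relations 2) (T : L.Theory) : Prop :=
  ∀ (M : Type w) [Nonempty M] [L.Structure M], M ⊨ T →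
    IsStrictTotalOrder M (fun a b : M => Structure.RelMap lt ![a, b]) ∧
      ∀ (m : ℕ) (φ : L.Formula (Unit ⊕ Fin m)) (b : Fin m → M), ∃ K : ℕ,
        UnionOfAtMostConvex (fun a b : M => Structure.RelMap lt ![a, b]) K
          (realizeSet L M φ b)


namespace VCMin

variable {M : Type*}

/-- Alternating chain of length `n`, strictly below `x`, whose top element is in `S` iff `t`. -/
def PatA' (r : M → M → Prop) (S : Set M) : Bool → ℕ → M → Prop
  | _, 0, _ => True
  | t, n + 1, x => ∃ z, r z x ∧ (z ∈ S ↔ t = true) ∧ PatA' r S (!t) n z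

/-- Alternating chain of length `n`, weakly below `x`, whose top element is in `S` iff `t`. -/
def PatA (r : M → M → Prop) (S : Set M) (t : Bool) (n : ℕ) (x : M) : Prop :=
  match n with
  | 0 => True
  | n + 1 => ∃ z, (r z x ∨ z = x) ∧ (z ∈ S ↔ t = true) ∧ PatA' r S (!t) n z

variable {r : M → M → Prop} {S : Set M}

theorem patA'_zero {t x} : PatA' r S t 0 x ↔ True := Iff.rfl

theorem patA_zero {t x} : PatA r S t 0 x ↔ True := Iff.rfl

theorem patA'_succ {t n x} : PatA' r S t (n + 1) x ↔
    ∃ z, r z x ∧ (z ∈ S ↔ t = true) ∧ PatA' r S (!t) n z := Iff.rfl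

theorem patA_succ {t n x} : PatA r S t (n + 1) x ↔
    ∃ z, (r z x ∨ z = x) ∧ (z ∈ S ↔ t = true) ∧ PatA' r S (!t) n z := Iff.rfl

theorem PatA'.patA {t n x} (h : PatA' r S t n x) : PatA r S t n x := by
  cases n with
  | zero => trivial
  | succ n => obtain ⟨z, h1, h2, h3⟩ := h; exact ⟨z, Or.inl h1, h2, h3⟩

theorem PatA.up (htr : ∀ a b c : M, r a b → r b c → r a c) {t n x x'}
    (h : PatA r S t n x) (hx : r x x') : PatA r S t n x' := by
  cases n with
  | zero => trivial
  | succ n =>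
    obtain ⟨z, h1, h2, h3⟩ := h
    refine ⟨z, Or.inl ?_, h2, h3⟩
    rcases h1 with h1 | rfl
    · exact htr _ _ _ h1 hx
    · exact hx

theorem PatA'.drop2 {t n x} (h : PatA' r S t (n + 2) x) : PatA' r S t n x := by
  induction n generalizing t x with
  | zero => trivial
  | succ n ih =>
    obtain ⟨z, h1, h2, h3⟩ := h
    exact ⟨z, h1, h2, ih h3⟩

theorem PatA.drop2 {t n x} (h : PatA r S t (n + 2) x) : PatA r S t n x := by
  cases n with
  | zero => trivial
  | succ n =>
    obtain ⟨z, h1, h2, h3⟩ := h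
    exact ⟨z, h1, h2, h3.drop2⟩

theorem PatA.dropAdd {t n x} (d : ℕ) (h : PatA r S t (n + 2 * d) x) : PatA r S t n x := by
  induction d with
  | zero => exact h
  | succ d ih =>
    refine ih (PatA.drop2 ?_)
    have e : n + 2 * (d + 1) = n + 2 * d + 2 := by ring
    rwa [e] at h

theorem PatA.single {x} (hx : x ∈ S) : PatA r S true 1 x :=
  ⟨x, Or.inr rfl, by simpa using hx, trivial⟩

theorem PatA.strict {t n x} (h : PatA r S t n x) (hx : ¬(x ∈ S ↔ t = true)) :
    PatA' r S t n x := by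
  cases n with
  | zero => trivial
  | succ n =>
    obtain ⟨z, h1, h2, h3⟩ := h
    rcases h1 with h1 | rfl
    · exact ⟨z, h1, h2, h3⟩
    · exact absurd h2 hx

theorem PatA.extend {t n x} (h : PatA r S t n x) (hx : x ∈ S ↔ (!t) = true) :
    PatA r S (!t) (n + 1) x := by
  refine ⟨x, Or.inr rfl, hx, ?_⟩
  rw [Bool.not_not]
  exact h.strict (by cases t <;> simp_all)

theorem PatA'.transfer {S₂ : Set M} (htr : ∀ a b c : M, r a b → r b c → r a c) {t n x}
    (hag : ∀ u, r u x → (u ∈ S ↔ u ∈ S₂)) (h : PatA' r S t n x) : PatA' r S₂ t n x := by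
  induction n generalizing t x with
  | zero => trivial
  | succ n ih =>
    obtain ⟨z, h1, h2, h3⟩ := h
    exact ⟨z, h1, ((hag z h1).symm.trans h2), ih (fun u hu => hag u (htr _ _ _ hu h1)) h3⟩

theorem no_long_chain (htr : ∀ a b c : M, r a b → r b c → r a c) :
    ∀ (k : ℕ) (S : Set M) (C : Finset (Set M)), C.card ≤ k →
      (∀ D ∈ C, IsRConvex r D) → S = ⋃₀ ↑C → ∀ x, ¬ PatA r S true (2 * k + 1) x := by
  intro k
  induction k with
  | zero =>
    rintro S C hcard hconv rfl x ⟨y, -, hyS, -⟩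
    rw [Nat.le_zero, Finset.card_eq_zero] at hcard
    subst hcard
    simpa using hyS.mpr rfl
  | succ k ih =>
    rintro S C hcard hconv hS x h
    rw [show 2 * (k + 1) + 1 = (2 * k + 2) + 1 by ring, patA_succ] at h
    obtain ⟨y, hyx, hyS, h'⟩ := h
    rw [show (2 : ℕ) * k + 2 = (2 * k + 1) + 1 by ring, patA'_succ] at h'
    obtain ⟨z, hzy, hzS, h''⟩ := h'
    have hyS' : y ∈ S := by simpa using hyS
    have hzS' : z ∉ S := by intro hz; simpa using hzS.mp hz
    obtain ⟨D, hD, hyD⟩ : ∃ D ∈ C, y ∈ D := by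
      have := hS ▸ hyS'
      simpa [Set.mem_sUnion] using this
    classical
    set S₂ : Set M := S ∩ {w | r w z} with hS₂
    set C₂ : Finset (Set M) := (C.erase D).image (fun E => E ∩ {w | r w z}) with hC₂
    have hcard₂ : C₂.card ≤ k := by
      refine Finset.card_image_le.trans ?_
      rw [Finset.card_erase_of_mem hD]
      omega
    have hconv₂ : ∀ E ∈ C₂, IsRConvex r E := by
      intro E hE
      rw [hC₂, Finset.mem_image] at hE
      obtain ⟨E₀, hE₀, rfl⟩ := hE
      rintro a b c hab hbc ⟨haE, -⟩ ⟨hcE, hcz⟩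
      exact ⟨hconv E₀ (Finset.mem_of_mem_erase hE₀) a b c hab hbc haE hcE,
        htr _ _ _ hbc hcz⟩
    have hS₂eq : S₂ = ⋃₀ ↑C₂ := by
      ext w
      simp only [hS₂, hC₂, Set.mem_inter_iff, Set.mem_setOf_eq, Finset.coe_image,
        Set.sUnion_image, Set.mem_iUnion, Finset.mem_coe, Finset.mem_erase]
      constructor
      · rintro ⟨hwS, hwz⟩
        obtain ⟨E, hE, hwE⟩ : ∃ E ∈ C, w ∈ E := by
          have := hS ▸ hwS
          simpa [Set.mem_sUnion] using this
        refine ⟨E, ⟨?_, hE⟩, hwE, hwz⟩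
        rintro rfl
        exact hzS' (hS ▸ (Set.mem_sUnion.2 ⟨E, hE, hconv E hE w z y hwz hzy hwE hyD⟩))
      · rintro ⟨E, ⟨-, hE⟩, hwE, hwz⟩
        exact ⟨hS ▸ Set.mem_sUnion.2 ⟨E, hE, hwE⟩, hwz⟩
    have h₃ : PatA' r S₂ true (2 * k + 1) z := by
      have : PatA' r S (!!true) (2 * k + 1) z := h''
      rw [Bool.not_not] at this
      exact this.transfer htr (fun u hu => by
        simp only [hS₂, Set.mem_inter_iff, Set.mem_setOf_eq]
        exact ⟨fun hu' => ⟨hu', hu⟩, fun h => h.1⟩)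
    exact ih S₂ C₂ hcard₂ hconv₂ hS₂eq z h₃.patA

/-- The main combinatorial equivalence. -/
theorem mem_iff_pattern {K : ℕ} (hKpos : 0 < K)
    (hbound : ∀ y, ¬ PatA r S true (2 * K + 1) y) (x : M) :
    x ∈ S ↔ ∃ j, j < K ∧ PatA r S true (2 * j + 1) x ∧ ¬ PatA r S false (2 * j + 2) x := by
  classical
  constructor
  · intro hx
    have hwit : ¬ PatA r S true (2 * (K - 1 + 1) + 1) x := by
      rw [show 2 * (K - 1 + 1) + 1 = 2 * K + 1 by omega]
      exact hbound x
    have hex : ∃ j, ¬ PatA r S true (2 * (j + 1) + 1) x := ⟨K - 1, hwit⟩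
    set j₀ := Nat.find hex with hj₀
    have hspec : ¬ PatA r S true (2 * (j₀ + 1) + 1) x := Nat.find_spec hex
    have hj₀le : j₀ < K := by
      have := Nat.find_min' hex hwit
      omega
    refine ⟨j₀, hj₀le, ?_, ?_⟩
    · rcases Nat.eq_zero_or_pos j₀ with h0 | h0
      · rw [h0]
        simpa using PatA.single hx
      · have := Nat.find_min hex (m := j₀ - 1) (by omega)
        rw [not_not, show 2 * (j₀ - 1 + 1) + 1 = 2 * j₀ + 1 by omega] at this
        exact this
    · intro hq
      have := hq.extend (t := false) (by simpa using hx)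
      rw [show (2 : ℕ) * j₀ + 2 + 1 = 2 * (j₀ + 1) + 1 by ring] at this
      exact hspec (by simpa using this)
  · rintro ⟨j, -, h1, h2⟩
    by_contra hx
    have := h1.extend (t := true) (by simpa using hx)
    rw [show (2 : ℕ) * j + 1 + 1 = 2 * j + 2 by ring] at this
    exact h2 (by simpa using this)


variable {L : Language} {m : ℕ}

/-- Relabeling sending `x` to the new bound variable and keeping the parameters. -/
def vcShift (m : ℕ) : Unit ⊕ Fin m → (Unit ⊕ Fin m) ⊕ Unit :=
  Sum.elim (fun _ => Sum.inr ()) (fun j => Sum.inl (Sum.inr j))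

/-- Formula for `PatA'`. -/
noncomputable def Af' (lt : L.Relations 2) (φ : L.Formula (Unit ⊕ Fin m)) :
    Bool → ℕ → L.Formula (Unit ⊕ Fin m)
  | _, 0 => ⊤
  | t, n + 1 =>
    Formula.iExs Unit
      ((lt.formula₂ (Term.var (Sum.inr ())) (Term.var (Sum.inl (Sum.inl ()))) ⊓
          (if t then φ.relabel (vcShift m) else (φ.relabel (vcShift m)).not)) ⊓
        (Af' lt φ (!t) n).relabel (vcShift m))

/-- Formula for `PatA`. -/
noncomputable def Af (lt : L.Relations 2) (φ : L.Formula (Unit ⊕ Fin m)) (t : Bool) :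
    ℕ → L.Formula (Unit ⊕ Fin m)
  | 0 => ⊤
  | n + 1 =>
    Formula.iExs Unit
      (((lt.formula₂ (Term.var (Sum.inr ())) (Term.var (Sum.inl (Sum.inl ()))) ⊔
          Term.equal (Term.var (Sum.inr ())) (Term.var (Sum.inl (Sum.inl ())))) ⊓
          (if t then φ.relabel (vcShift m) else (φ.relabel (vcShift m)).not)) ⊓
        (Af' lt φ (!t) n).relabel (vcShift m))

variable [L.Structure M] {lt : L.Relations 2} {φ : L.Formula (Unit ⊕ Fin m)}

theorem elim_shift (v : Unit ⊕ Fin m → M) (i : Unit → M) :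
    (Sum.elim v i ∘ vcShift m) = Sum.elim (fun _ : Unit => i ()) (v ∘ Sum.inr) := by
  funext a
  rcases a with u | j
  · cases u; rfl
  · rfl

theorem mem_realizeSet_iff {a : M} {b : Fin m → M} :
    a ∈ realizeSet L M φ b ↔ φ.Realize (Sum.elim (fun _ => a) b) := Iff.rfl

theorem realize_Af' (t : Bool) (n : ℕ) (v : Unit ⊕ Fin m → M) :
    (Af' lt φ t n).Realize v ↔
      PatA' (fun a b : M => Structure.RelMap lt ![a, b])
        (realizeSet L M φ (v ∘ Sum.inr)) t n (v (Sum.inl ())) := by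
  induction n generalizing t v with
  | zero => simp [Af', patA'_zero]
  | succ n ih =>
    rw [show Af' lt φ t (n+1) = Formula.iExs Unit
      ((lt.formula₂ (Term.var (Sum.inr ())) (Term.var (Sum.inl (Sum.inl ()))) ⊓
          (if t then φ.relabel (vcShift m) else (φ.relabel (vcShift m)).not)) ⊓
        (Af' lt φ (!t) n).relabel (vcShift m)) from rfl]
    rw [Formula.realize_iExs, patA'_succ]
    constructor
    · rintro ⟨i, hi⟩
      refine ⟨i (), ?_⟩
      have hi' : ((lt.formula₂ (Term.var (Sum.inr ())) (Term.var (Sum.inl (Sum.inl ()))) ⊓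
          (if t then φ.relabel (vcShift m) else (φ.relabel (vcShift m)).not)) ⊓
        (Af' lt φ (!t) n).relabel (vcShift m)).Realize (Sum.elim v i) := hi
      rw [Formula.realize_inf, Formula.realize_inf] at hi'
      obtain ⟨⟨h1, h2⟩, h3⟩ := hi'
      refine ⟨?_, ?_, ?_⟩
      · rw [Formula.realize_rel₂] at h1
        simpa using h1
      · rw [mem_realizeSet_iff]
        cases t
        · rw [if_neg (by decide)] at h2
          rw [Formula.realize_not, Formula.realize_relabel, elim_shift] at h2
          simpa using h2
        · rw [if_pos (by decide)] at h2
          rw [Formula.realize_relabel, elim_shift] at h2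
          simpa using h2
      · rw [Formula.realize_relabel, elim_shift] at h3
        have := (ih (!t) _).mp h3
        simpa using this
    · rintro ⟨z, hz1, hz2, hz3⟩
      refine ⟨fun _ => z, ?_⟩
      show ((lt.formula₂ (Term.var (Sum.inr ())) (Term.var (Sum.inl (Sum.inl ()))) ⊓
          (if t then φ.relabel (vcShift m) else (φ.relabel (vcShift m)).not)) ⊓
        (Af' lt φ (!t) n).relabel (vcShift m)).Realize (Sum.elim v (fun _ => z))
      rw [Formula.realize_inf, Formula.realize_inf]
      refine ⟨⟨?_, ?_⟩, ?_⟩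
      · rw [Formula.realize_rel₂]
        simpa using hz1
      · rw [mem_realizeSet_iff] at hz2
        cases t
        · rw [if_neg (by decide)]
          rw [Formula.realize_not, Formula.realize_relabel, elim_shift]
          simpa using hz2
        · rw [if_pos (by decide)]
          rw [Formula.realize_relabel, elim_shift]
          simpa using hz2
      · rw [Formula.realize_relabel, elim_shift]
        refine (ih (!t) _).mpr ?_
        simpa using hz3

theorem realize_Af (t : Bool) (n : ℕ) (v : Unit ⊕ Fin m → M) :
    (Af lt φ t n).Realize v ↔
      PatA (fun a b : M => Structure.RelMap lt ![a, b])
        (realizeSet L M φ (v ∘ Sum.inr)) t n (v (Sum.inl ())) := by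
  cases n with
  | zero => simp [Af, patA_zero]
  | succ n =>
    rw [show Af lt φ t (n+1) = Formula.iExs Unit
      (((lt.formula₂ (Term.var (Sum.inr ())) (Term.var (Sum.inl (Sum.inl ()))) ⊔
          Term.equal (Term.var (Sum.inr ())) (Term.var (Sum.inl (Sum.inl ())))) ⊓
          (if t then φ.relabel (vcShift m) else (φ.relabel (vcShift m)).not)) ⊓
        (Af' lt φ (!t) n).relabel (vcShift m)) from rfl]
    rw [Formula.realize_iExs, patA_succ]
    constructor
    · rintro ⟨i, hi⟩
      refine ⟨i (), ?_⟩
      have hi' : (((lt.formula₂ (Term.var (Sum.inr ())) (Term.var (Sum.inl (Sum.inl ()))) ⊔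
          Term.equal (Term.var (Sum.inr ())) (Term.var (Sum.inl (Sum.inl ())))) ⊓
          (if t then φ.relabel (vcShift m) else (φ.relabel (vcShift m)).not)) ⊓
        (Af' lt φ (!t) n).relabel (vcShift m)).Realize (Sum.elim v i) := hi
      rw [Formula.realize_inf, Formula.realize_inf, Formula.realize_sup] at hi'
      obtain ⟨⟨h1, h2⟩, h3⟩ := hi'
      refine ⟨?_, ?_, ?_⟩
      · rcases h1 with h1 | h1
        · rw [Formula.realize_rel₂] at h1
          exact Or.inl (by simpa using h1)
        · rw [Formula.realize_equal] at h1
          exact Or.inr (by simpa using h1)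
      · rw [mem_realizeSet_iff]
        cases t
        · rw [if_neg (by decide)] at h2
          rw [Formula.realize_not, Formula.realize_relabel, elim_shift] at h2
          simpa using h2
        · rw [if_pos (by decide)] at h2
          rw [Formula.realize_relabel, elim_shift] at h2
          simpa using h2
      · rw [Formula.realize_relabel, elim_shift] at h3
        have := (realize_Af' (!t) _ _).mp h3
        simpa using this
    · rintro ⟨z, hz1, hz2, hz3⟩
      refine ⟨fun _ => z, ?_⟩
      show (((lt.formula₂ (Term.var (Sum.inr ())) (Term.var (Sum.inl (Sum.inl ()))) ⊔
          Term.equal (Term.var (Sum.inr ())) (Term.var (Sum.inl (Sum.inl ())))) ⊓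
          (if t then φ.relabel (vcShift m) else (φ.relabel (vcShift m)).not)) ⊓
        (Af' lt φ (!t) n).relabel (vcShift m)).Realize (Sum.elim v (fun _ => z))
      rw [Formula.realize_inf, Formula.realize_inf, Formula.realize_sup]
      refine ⟨⟨?_, ?_⟩, ?_⟩
      · rcases hz1 with hz1 | hz1
        · exact Or.inl (by rw [Formula.realize_rel₂]; simpa using hz1)
        · exact Or.inr (by rw [Formula.realize_equal]; simpa using hz1)
      · rw [mem_realizeSet_iff] at hz2
        cases t
        · rw [if_neg (by decide)]
          rw [Formula.realize_not, Formula.realize_relabel, elim_shift]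
          simpa using hz2
        · rw [if_pos (by decide)]
          rw [Formula.realize_relabel, elim_shift]
          simpa using hz2
      · rw [Formula.realize_relabel, elim_shift]
        refine (realize_Af' (!t) _ _).mpr ?_
        simpa using hz3


section BigOr

variable {L : Language} {α : Type*}

/-- Finite disjunction of the formulas `D 0, ..., D k`. -/
def bigOr (D : ℕ → L.Formula α) : ℕ → L.Formula α
  | 0 => D 0
  | k + 1 => bigOr D k ⊔ D (k + 1)

theorem bigOr_boolComb {Ψ : Set ((k : ℕ) × L.Formula (Unit ⊕ Fin k))} {m : ℕ}
    (D : ℕ → L.Formula (Unit ⊕ Fin m)) (hD : ∀ j, BoolCombOf Ψ m (D j)) (k : ℕ) :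
    BoolCombOf Ψ m (bigOr D k) := by
  induction k with
  | zero => exact hD 0
  | succ k ih => exact BoolCombOf.or ih (hD (k + 1))

theorem realize_bigOr {M : Type*} [L.Structure M] (D : ℕ → L.Formula α) (k : ℕ) (v : α → M) :
    (bigOr D k).Realize v ↔ ∃ j ≤ k, (D j).Realize v := by
  induction k with
  | zero =>
    show (D 0).Realize v ↔ _
    constructor
    · exact fun h => ⟨0, le_refl 0, h⟩
    · rintro ⟨j, hj, h⟩
      rwa [Nat.le_zero.1 hj] at h
  | succ k ih =>
    show (bigOr D k ⊔ D (k + 1)).Realize v ↔ _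
    rw [Formula.realize_sup, ih]
    constructor
    · rintro (⟨j, hj, h⟩ | h)
      · exact ⟨j, by omega, h⟩
      · exact ⟨k + 1, le_refl _, h⟩
    · rintro ⟨j, hj, h⟩
      rcases Nat.lt_or_ge j (k + 1) with hlt | hge
      · exact Or.inl ⟨j, by omega, h⟩
      · exact Or.inr (by rwa [show j = k + 1 by omega] at h)

end BigOr

theorem elim_eta {M : Type*} {m : ℕ} (v : Unit ⊕ Fin m → M) :
    Sum.elim (fun _ : Unit => v (Sum.inl ())) (v ∘ Sum.inr) = v := by
  funext a
  rcases a with u | j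
  · cases u; rfl
  · rfl

theorem exists_bound {L : Language} (lt : L.Relations 2) (T : L.Theory)
    (hwo : WeaklyOMinimal.{w} L lt T) (m : ℕ) (φ : L.Formula (Unit ⊕ Fin m)) :
    ∃ K : ℕ, 0 < K ∧ ∀ (M : Type w) (_ : Nonempty M) (_ : L.Structure M), M ⊨ T →
      ∀ v : Unit ⊕ Fin m → M, ¬ (Af lt φ true (2 * K + 1)).Realize v := by
  by_contra hbad
  push_neg at hbad
  have h' := fun K : ℕ => hbad (K + 1) (Nat.succ_pos K)
  choose Mf hne hst hmod vf hvf using h'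
  letI : ∀ K : ℕ, L.Structure (Mf K) := hst
  haveI : ∀ K : ℕ, Nonempty (Mf K) := hne
  set u : Ultrafilter ℕ := Filter.hyperfilter ℕ with hu
  let N : Type w := (u : Filter ℕ).Product Mf
  letI : L.Structure N := inferInstanceAs (L.Structure ((u : Filter ℕ).Product Mf))
  haveI : Nonempty N := inferInstanceAs (Nonempty ((u : Filter ℕ).Product Mf))
  have hNmod : N ⊨ T := by
    rw [Theory.model_iff]
    intro σ hσ
    have : ((u : Filter ℕ).Product Mf) ⊨ σ ↔ ∀ᶠ K in (u : Filter ℕ), Mf K ⊨ σ :=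
      Ultraproduct.sentence_realize (M := Mf) (u := u) σ
    exact this.2 (Filter.Eventually.of_forall fun K => (Theory.model_iff T).1 (hmod K) σ hσ)
  let x : (Unit ⊕ Fin m) → ∀ K, Mf K := fun i K => vf K i
  let vN : Unit ⊕ Fin m → N := fun i => (x i : (u : Filter ℕ).Product Mf)
  have hpat : ∀ n : ℕ, PatA (fun a b : N => Structure.RelMap lt ![a, b])
      (realizeSet L N φ (vN ∘ Sum.inr)) true (2 * n + 1) (vN (Sum.inl ())) := by
    intro n
    rw [← realize_Af]
    have hev : ∀ᶠ K in (u : Filter ℕ), n ≤ K := by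
      exact Nat.hyperfilter_le_atTop (Filter.eventually_atTop.2 ⟨n, fun K hK => hK⟩)
    have hall : ∀ᶠ K in (u : Filter ℕ),
        (Af lt φ true (2 * n + 1)).Realize (fun i => x i K) := by
      refine hev.mono fun K hK => ?_
      have h1 := hvf K
      rw [realize_Af] at h1 ⊢
      refine PatA.dropAdd (K + 1 - n) ?_
      rw [show 2 * n + 1 + 2 * (K + 1 - n) = 2 * (K + 1) + 1 by omega]
      exact h1
    exact (Ultraproduct.realize_formula_cast (Af lt φ true (2 * n + 1)) x).2 hall
  obtain ⟨hSTO, hfin⟩ := hwo N hNmod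
  have htr : ∀ a b c : N, Structure.RelMap lt ![a, b] → Structure.RelMap lt ![b, c] →
      Structure.RelMap lt ![a, c] := fun a b c hab hbc =>
    hSTO.toIsStrictOrder.toIsTrans.trans a b c hab hbc
  obtain ⟨K₀, C, hconv, hSeq⟩ := hfin m φ (vN ∘ Sum.inr)
  classical
  set C' : Finset (Set N) := Finset.image C Finset.univ with hC'
  have hcard : C'.card ≤ K₀ := le_trans Finset.card_image_le (by simp)
  have hconv' : ∀ D ∈ C', IsRConvex (fun a b : N => Structure.RelMap lt ![a, b]) D := by
    intro D hD
    rw [hC', Finset.mem_image] at hD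
    obtain ⟨i, -, rfl⟩ := hD
    exact hconv i
  have hSeq' : realizeSet L N φ (vN ∘ Sum.inr) = ⋃₀ ↑C' := by
    rw [hSeq]
    ext a
    simp [hC', Set.mem_sUnion]
  exact no_long_chain htr K₀ _ C' hcard hconv' hSeq' _ (hpat K₀)

end VCMin

theorem stmt_17 {L : Language} (lt : L.Relations 2) (T : L.Theory)
    (hcomp : T.IsComplete) (hsat : T.IsSatisfiable)
    (hwo : WeaklyOMinimal.{w} L lt T) : FullyVCMinimal.{w} L T := by
  classical
  refine ⟨{p : (k : ℕ) × L.Formula (Unit ⊕ Fin k) |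
      ∀ (M : Type w) (_ : Nonempty M) (_ : L.Structure M), M ⊨ T →
        ∀ (b : Fin p.1 → M) (a a' : M), Structure.RelMap lt ![a, a'] →
          a' ∈ realizeSet L M p.2 b → a ∈ realizeSet L M p.2 b}, ?_, ?_⟩
  · -- independence dimension ≤ 1
    intro M _ _ hMT A hA B hB
    obtain ⟨p, hp, b, rfl⟩ := hA
    obtain ⟨q, hq, c, rfl⟩ := hB
    obtain ⟨hSTO, -⟩ := hwo M hMT
    rcases Set.eq_empty_or_nonempty (realizeSet L M p.2 b \ realizeSet L M q.2 c) with h1 | h1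
    · exact Or.inr (Or.inl h1)
    rcases Set.eq_empty_or_nonempty (realizeSet L M q.2 c \ realizeSet L M p.2 b) with h2 | h2
    · exact Or.inr (Or.inr (Or.inl h2))
    exfalso
    obtain ⟨a, haA, haB⟩ := h1
    obtain ⟨a', ha'B, ha'A⟩ := h2
    rcases @trichotomous_of _ _ hSTO.toTrichotomous a a' with hr | rfl | hr
    · exact haB (hq M ‹Nonempty M› ‹L.Structure M› hMT c a a' hr ha'B)
    · exact haB ha'B
    · exact ha'A (hp M ‹Nonempty M› ‹L.Structure M› hMT b a' a hr haA)
  · -- every formula is a Boolean combination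
    intro m φ
    obtain ⟨K, hKpos, hK⟩ := VCMin.exists_bound lt T hwo m φ
    have hmem : ∀ (t : Bool) (n : ℕ),
        (⟨m, (VCMin.Af lt φ t n).not⟩ : (k : ℕ) × L.Formula (Unit ⊕ Fin k)) ∈
          {p : (k : ℕ) × L.Formula (Unit ⊕ Fin k) |
            ∀ (M : Type w) (_ : Nonempty M) (_ : L.Structure M), M ⊨ T →
              ∀ (b : Fin p.1 → M) (a a' : M), Structure.RelMap lt ![a, a'] →
                a' ∈ realizeSet L M p.2 b → a ∈ realizeSet L M p.2 b} := by
      intro t n M _ _ hMT b a a' hr ha'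
      obtain ⟨hSTO, -⟩ := hwo M hMT
      have htr : ∀ x y z : M, Structure.RelMap lt ![x, y] → Structure.RelMap lt ![y, z] →
          Structure.RelMap lt ![x, z] := fun x y z hab hbc =>
        hSTO.toIsStrictOrder.toIsTrans.trans x y z hab hbc
      rw [VCMin.mem_realizeSet_iff, Formula.realize_not] at ha' ⊢
      intro hcon
      apply ha'
      rw [VCMin.realize_Af] at hcon ⊢
      simp only [Sum.elim_comp_inr, Sum.elim_inl] at hcon ⊢
      exact hcon.up htr hr
    set D : ℕ → L.Formula (Unit ⊕ Fin m) := fun j =>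
      (((VCMin.Af lt φ true (2 * j + 1)).not.relabel
          (Sum.map id (id : Fin m → Fin m))).not ⊓
        ((VCMin.Af lt φ false (2 * j + 2)).not.relabel
          (Sum.map id (id : Fin m → Fin m)))) with hD
    refine ⟨VCMin.bigOr D (K - 1), ?_, ?_⟩
    · refine VCMin.bigOr_boolComb D (fun j => ?_) (K - 1)
      exact BoolCombOf.and
        (BoolCombOf.not (BoolCombOf.of ⟨m, (VCMin.Af lt φ true (2 * j + 1)).not⟩
          (hmem true (2 * j + 1)) id))
        (BoolCombOf.of ⟨m, (VCMin.Af lt φ false (2 * j + 2)).not⟩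
          (hmem false (2 * j + 2)) id)
    · intro M _ _ hMT v
      have hveq : Sum.elim (fun _ : Unit => v (Sum.inl ())) (v ∘ Sum.inr) = v :=
        VCMin.elim_eta v
      have hbound : ∀ y : M, ¬ VCMin.PatA (fun a b : M => Structure.RelMap lt ![a, b])
          (realizeSet L M φ (v ∘ Sum.inr)) true (2 * K + 1) y := by
        intro y hy
        apply hK M ‹Nonempty M› ‹L.Structure M› hMT (Sum.elim (fun _ => y) (v ∘ Sum.inr))
        rw [VCMin.realize_Af]
        simpa using hy
      have hx : φ.Realize v ↔ v (Sum.inl ()) ∈ realizeSet L M φ (v ∘ Sum.inr) := by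
        rw [VCMin.mem_realizeSet_iff, hveq]
      rw [hx, VCMin.mem_iff_pattern hKpos hbound, VCMin.realize_bigOr]
      constructor
      · rintro ⟨j, hj, h1, h2⟩
        refine ⟨j, by omega, ?_⟩
        rw [hD]
        simp only [Formula.realize_inf, Formula.realize_not, Formula.realize_relabel,
          Sum.map_id_id, Function.comp_id, VCMin.realize_Af]
        exact ⟨fun h => h h1, fun h => h2 h⟩
      · rintro ⟨j, hj, h⟩
        rw [hD] at h
        simp only [Formula.realize_inf, Formula.realize_not, Formula.realize_relabel,
          Sum.map_id_id, Function.comp_id, VCMin.realize_Af] at h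
        exact ⟨j, by omega, not_not.1 h.1, h.2⟩
end

section
/- Let T be a complete satisfiable L-theory. Suppose there exists a set Ψ of partitioned L-formulas ψ(x; ȳ) (each with x a single free variable) such that: (i) for every model M ⊨ T, the family {ψ(M; b̄) : ψ(x; ȳ) ∈ Ψ, b̄ ∈ M^{lg(ȳ)}} of subsets of M has independence dimension ≤ 1 with respect to M; and (ii)' for every partitioned L-formula φ(x; ȳ), every model M ⊨ T, and every b̄ ∈ M^{lg(ȳ)}, there exist formulas ψ_0(x; ȳ), …, ψ_{n−1}(x; ȳ) ∈ Ψ (with parameter variables of length lg(ȳ)) such that φ(M; b̄) lies in the Boolean algebra of subsets of M generated by {ψ_0(M; b̄), …, ψ_{n−1}(M; b̄)}. Then T is fully VC-minimal, i.e., there exists a set Ψ' of partitioned L-formulas satisfying (i) and such that every partitioned L-formula φ(x; ȳ) is T-equivalent to a Boolean combination of formulas from Ψ' whose free variables are among (x; ȳ). -/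
open FirstOrder Language

universe w

/-- The Boolean algebra of subsets of `X` generated by a family `G`. -/
inductive GenBoolAlg {X : Type*} (G : Set (Set X)) : Set X → Prop
  | base {A : Set X} : A ∈ G → GenBoolAlg G A
  | compl {A : Set X} : GenBoolAlg G A → GenBoolAlg G Aᶜ
  | union {A B : Set X} : GenBoolAlg G A → GenBoolAlg G B → GenBoolAlg G (A ∪ B)
  | inter {A B : Set X} : GenBoolAlg G A → GenBoolAlg G B → GenBoolAlg G (A ∩ B)


section Aux

variable {L : Language}

lemma boolCombOf_mono {Ψ Ψ' : Set ((k : ℕ) × L.Formula (Unit ⊕ Fin k))}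
    (h : Ψ ⊆ Ψ') {m : ℕ} {θ : L.Formula (Unit ⊕ Fin m)} (hθ : BoolCombOf Ψ m θ) :
    BoolCombOf Ψ' m θ := by
  induction hθ with
  | of p hp ρ => exact .of p (h hp) ρ
  | not _ ih => exact .not ih
  | and _ _ ih1 ih2 => exact .and ih1 ih2
  | or _ _ ih1 ih2 => exact .or ih1 ih2

lemma genBoolAlg_boolComb {M : Type*} [L.Structure M]
    {Ψ : Set ((k : ℕ) × L.Formula (Unit ⊕ Fin k))} {m : ℕ} {b : Fin m → M} {X : Set M}
    (h : GenBoolAlg {S : Set M | ∃ ψ : L.Formula (Unit ⊕ Fin m),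
        (⟨m, ψ⟩ : (k : ℕ) × L.Formula (Unit ⊕ Fin k)) ∈ Ψ ∧ S = realizeSet L M ψ b} X) :
    ∃ θ : L.Formula (Unit ⊕ Fin m), BoolCombOf Ψ m θ ∧ X = realizeSet L M θ b := by
  induction h with
  | base hA =>
    obtain ⟨ψ, hψ, rfl⟩ := hA
    refine ⟨ψ.relabel (Sum.map id id), .of ⟨m, ψ⟩ hψ id, ?_⟩
    ext a
    simp only [realizeSet, Set.mem_setOf_eq, Formula.realize_relabel]
    constructor <;> intro hr <;>
      [skip; skip] <;>
      · convert hr using 2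
        funext x
        cases x <;> rfl
  | compl _ ih =>
    obtain ⟨θ, hθ, rfl⟩ := ih
    refine ⟨θ.not, .not hθ, ?_⟩
    ext a
    simp [realizeSet, Formula.realize_not]
  | union _ _ ih1 ih2 =>
    obtain ⟨θ₁, hθ₁, rfl⟩ := ih1
    obtain ⟨θ₂, hθ₂, rfl⟩ := ih2
    refine ⟨θ₁ ⊔ θ₂, .or hθ₁ hθ₂, ?_⟩
    ext a
    simp [realizeSet, Formula.realize_sup]
  | inter _ _ ih1 ih2 =>
    obtain ⟨θ₁, hθ₁, rfl⟩ := ih1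
    obtain ⟨θ₂, hθ₂, rfl⟩ := ih2
    refine ⟨θ₁ ⊓ θ₂, .and hθ₁ hθ₂, ?_⟩
    ext a
    simp [realizeSet, Formula.realize_inf]

lemma foldr_sup_boolComb {Ψ : Set ((k : ℕ) × L.Formula (Unit ⊕ Fin k))} {m : ℕ}
    {γ : Type*} (g : γ → L.Formula (Unit ⊕ Fin m)) (l : List γ)
    (β₀ : L.Formula (Unit ⊕ Fin m)) (hg : ∀ θ ∈ l, BoolCombOf Ψ m (g θ))
    (hβ : BoolCombOf Ψ m β₀) :
    BoolCombOf Ψ m (l.foldr (fun θ acc => g θ ⊔ acc) β₀) := by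
  induction l with
  | nil => exact hβ
  | cons a l ih =>
    exact .or (hg a (by simp)) (ih fun θ hθ => hg θ (by simp [hθ]))

lemma foldr_sup_realize {M : Type*} [L.Structure M] {α γ : Type*} (g : γ → L.Formula α)
    (l : List γ) (β₀ : L.Formula α) (v : α → M) :
    (l.foldr (fun θ acc => g θ ⊔ acc) β₀).Realize v ↔
      (∃ θ ∈ l, (g θ).Realize v) ∨ β₀.Realize v := by
  induction l with
  | nil => simp
  | cons a l ih =>
    simp only [List.foldr_cons, Formula.realize_sup, ih, List.mem_cons]
    constructor
    · rintro (h | ⟨⟨θ, hθ, hr⟩ | h⟩)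
      · exact Or.inl ⟨a, Or.inl rfl, h⟩
      · exact Or.inl ⟨θ, Or.inr hθ, hr⟩
      · exact Or.inr h
    · rintro (⟨θ, rfl | hθ, hr⟩ | h)
      · exact Or.inl hr
      · exact Or.inr (Or.inl ⟨θ, hθ, hr⟩)
      · exact Or.inr (Or.inr h)

/-- `∀ x (φ(x;ȳ) ↔ θ(x;ȳ))` as a formula in the variables `ȳ`. -/
noncomputable def eqvF {m : ℕ} (φ θ : L.Formula (Unit ⊕ Fin m)) : L.Formula (Fin m) :=
  ((φ.iff θ).relabel (Sum.elim (fun _ => Sum.inr ()) Sum.inl)).iAlls Unit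

lemma realize_eqvF {M : Type*} [L.Structure M] {m : ℕ}
    (φ θ : L.Formula (Unit ⊕ Fin m)) (b : Fin m → M) :
    (eqvF φ θ).Realize b ↔ ∀ a : M,
      (φ.Realize (Sum.elim (fun _ => a) b) ↔ θ.Realize (Sum.elim (fun _ => a) b)) := by
  rw [eqvF, Formula.realize_iAlls]
  simp only [Formula.realize_relabel, Function.comp_def]
  have key : ∀ i : Unit → M,
      (fun x => Sum.elim b i ((Sum.elim (fun _ => Sum.inr ()) Sum.inl :
        Unit ⊕ Fin m → Fin m ⊕ Unit) x)) = Sum.elim (fun _ => i ()) b := by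
    intro i
    funext x
    rcases x with x | x
    · rfl
    · rfl
  constructor
  · intro h a
    have h2 := h (fun _ => a)
    rw [key] at h2
    exact Formula.realize_iff.1 h2
  · intro h i
    rw [key i]
    exact Formula.realize_iff.2 (h (i ()))

/-- The formula `(∀x (φ ↔ θ)) ∧ θ` in variables `(x; ȳ)`, shaped so that its first
conjunct is literally an instance produced by `BoolCombOf.of`. -/
noncomputable def mkF {m : ℕ} (φ θ : L.Formula (Unit ⊕ Fin m)) : L.Formula (Unit ⊕ Fin m) :=
  (((eqvF φ θ).relabel (Sum.inr : Fin m → Unit ⊕ Fin m)).relabel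
    (Sum.map id (id : Fin m → Fin m))) ⊓ θ

lemma realize_mkF {M : Type*} [L.Structure M] {m : ℕ}
    (φ θ : L.Formula (Unit ⊕ Fin m)) (v : Unit ⊕ Fin m → M) :
    (mkF φ θ).Realize v ↔ (eqvF φ θ).Realize (v ∘ Sum.inr) ∧ θ.Realize v := by
  rw [mkF, Formula.realize_inf, Formula.realize_relabel, Formula.realize_relabel]
  have : (v ∘ Sum.map id (id : Fin m → Fin m)) ∘ Sum.inr = v ∘ Sum.inr := by
    funext j; rfl
  rw [this]

end Aux

theorem stmt_18 {L : Language} (T : L.Theory) (hcomp : T.IsComplete)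
    (hsat : T.IsSatisfiable)
    (Ψ : Set ((k : ℕ) × L.Formula (Unit ⊕ Fin k)))
    (hi : ∀ (M : Type w) [Nonempty M] [L.Structure M], M ⊨ T →
      IndepDimLEOne {S : Set M | ∃ p ∈ Ψ, ∃ b : Fin p.1 → M, S = realizeSet L M p.2 b})
    (hii' : ∀ (m : ℕ) (φ : L.Formula (Unit ⊕ Fin m))
      (M : Type w) [Nonempty M] [L.Structure M], M ⊨ T → ∀ b : Fin m → M,
        GenBoolAlg {S : Set M | ∃ ψ : L.Formula (Unit ⊕ Fin m),
            (⟨m, ψ⟩ : (k : ℕ) × L.Formula (Unit ⊕ Fin k)) ∈ Ψ ∧ S = realizeSet L M ψ b}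
          (realizeSet L M φ b)) :
    FullyVCMinimal.{w} L T := by
  classical
  -- `Ψ'` adds to `Ψ` all partitioned formulas in which `x` does not occur.
  refine ⟨Ψ ∪ {p | ∃ σ : L.Formula (Fin p.1), p.2 = σ.relabel Sum.inr}, ?_, ?_⟩
  · -- independence dimension ≤ 1
    intro M _ _ hMT A hA B hB
    have htriv : ∀ p ∈ {p : (k : ℕ) × L.Formula (Unit ⊕ Fin k) |
        ∃ σ : L.Formula (Fin p.1), p.2 = σ.relabel Sum.inr},
        ∀ b : Fin p.1 → M, realizeSet L M p.2 b = ∅ ∨ realizeSet L M p.2 b = Set.univ := by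
      rintro p ⟨σ, hσ⟩ b
      have hset : realizeSet L M p.2 b = {a : M | σ.Realize b} := by
        rw [hσ]
        ext a
        simp only [realizeSet, Set.mem_setOf_eq, Formula.realize_relabel, Sum.elim_comp_inr]
      by_cases hb : σ.Realize b
      · right; rw [hset]; ext a; simp [hb]
      · left; rw [hset]; ext a; simp [hb]
    obtain ⟨p, hp, bA, rfl⟩ := hA
    obtain ⟨q, hq, bB, rfl⟩ := hB
    rcases hp with hp | hp
    · rcases hq with hq | hq
      · exact hi M hMT _ ⟨p, hp, bA, rfl⟩ _ ⟨q, hq, bB, rfl⟩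
      · rcases htriv q hq bB with h | h
        · left; rw [h]; exact Set.inter_empty _
        · right; left; rw [h]; simp
    · rcases htriv p hp bA with h | h
      · left; rw [h]; exact Set.empty_inter _
      · right; right; left; rw [h]; simp
  · -- every formula is equivalent to a Boolean combination
    intro m φ
    by_cases hex : ∃ (M : Type w) (_ : L.Structure M), Nonempty M ∧ M ⊨ T
    swap
    · -- no models in universe `w`: vacuous, use `⊥`-like formula from the new part
      refine ⟨((⊥ : L.Formula (Fin m)).relabel Sum.inr).relabel (Sum.map id id),
        .of ⟨m, (⊥ : L.Formula (Fin m)).relabel Sum.inr⟩ (Or.inr ⟨⊥, rfl⟩) id, ?_⟩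
      intro M iN iS hMT
      exact absurd ⟨M, iS, iN, hMT⟩ hex
    obtain ⟨M₀, hstr, hne, hM₀T⟩ := hex
    letI := hstr; haveI := hne
    haveI : M₀ ⊨ T := hM₀T
    -- Step 1: in every `Type w` model, every parameter admits an equivalent Boolean
    -- combination.
    have hcover : ∀ (M : Type w) [Nonempty M] [L.Structure M], M ⊨ T →
        ∀ b : Fin m → M, ∃ θ, BoolCombOf Ψ m θ ∧ (eqvF φ θ).Realize b := by
      intro M _ _ hMT b
      obtain ⟨θ, hθ, hset⟩ := genBoolAlg_boolComb (hii' m φ M hMT b)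
      refine ⟨θ, hθ, (realize_eqvF φ θ b).2 fun a => ?_⟩
      have := Set.ext_iff.1 hset a
      simpa [realizeSet] using this
    -- Step 2: finitely many Boolean combinations suffice for `M₀`, by an ultrapower
    -- argument.
    have hfin : ∃ F : Finset (L.Formula (Unit ⊕ Fin m)), (∀ θ ∈ F, BoolCombOf Ψ m θ) ∧
        ∀ b : Fin m → M₀, ∃ θ ∈ F, (eqvF φ θ).Realize b := by
      by_contra hno
      push_neg at hno
      -- index the ultrapower by finite sets of definable subsets of `M₀ ^ m`
      let ι := {D : Set (Fin m → M₀) // ∃ θ, BoolCombOf Ψ m θ ∧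
        D = {b | (eqvF φ θ).Realize b}}
      let pk : ι → L.Formula (Unit ⊕ Fin m) := fun d => d.2.choose
      have hpk : ∀ d : ι, BoolCombOf Ψ m (pk d) ∧
          d.1 = {b | (eqvF φ (pk d)).Realize b} := fun d => d.2.choose_spec
      have hGb : ∀ F : Finset ι, ∃ b : Fin m → M₀, ∀ d ∈ F, ¬(eqvF φ (pk d)).Realize b := by
        intro F
        obtain ⟨b, hb⟩ := hno (F.image pk) (by
          intro θ hθ
          obtain ⟨d, _, rfl⟩ := Finset.mem_image.1 hθ
          exact (hpk d).1)
        exact ⟨b, fun d hd => hb _ (Finset.mem_image_of_mem pk hd)⟩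
      choose bb hbb using hGb
      haveI : (Filter.atTop : Filter (Finset ι)).NeBot := Filter.atTop_neBot
      let u : Ultrafilter (Finset ι) := Ultrafilter.of Filter.atTop
      let Ms := Filter.Product (↑u) (fun _ : Finset ι => M₀)
      haveI : Nonempty Ms := inferInstance
      haveI hMs : Ms ⊨ T := (Theory.model_iff T).2 fun σ hσ =>
        (Ultraproduct.sentence_realize σ).2
          (Filter.Eventually.of_forall fun _ => T.realize_sentence_of_mem hσ)
      let x : Fin m → ∀ _ : Finset ι, M₀ := fun i F => bb F i
      let bs : Fin m → Ms := fun i => (↑(x i) : Ms)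
      have hbad : ∀ θ, BoolCombOf Ψ m θ → ¬(eqvF φ θ).Realize bs := by
        intro θ hθ hr
        have hr' : (eqvF φ θ).Realize (fun i => (↑(x i) : Ms)) := hr
        rw [Ultraproduct.realize_formula_cast] at hr'
        set d : ι := ⟨{b | (eqvF φ θ).Realize b}, θ, hθ, rfl⟩ with hd
        have hev : ∀ᶠ F : Finset ι in (u : Filter (Finset ι)),
            ¬(eqvF φ θ).Realize (bb F) := by
          have h1 : ∀ᶠ F : Finset ι in Filter.atTop, d ∈ F :=
            Filter.eventually_atTop.2 ⟨{d}, fun F hF =>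
              Finset.singleton_subset_iff.1 hF⟩
          refine (h1.filter_mono (Ultrafilter.of_le Filter.atTop)).mono fun F hdF hreal => ?_
          apply hbb F d hdF
          have hmem : bb F ∈ d.1 := hreal
          rw [(hpk d).2] at hmem
          exact hmem
        have hcontr := (hr'.and hev).exists
        obtain ⟨F, h1, h2⟩ := hcontr
        exact h2 h1
      obtain ⟨θs, hθs, hes⟩ := hcover Ms hMs bs
      exact hbad θs hθs hes
    obtain ⟨F, hFbc, hFcover⟩ := hfin
    have hFne : F.Nonempty := by
      obtain ⟨θ, hθ, _⟩ := hFcover (fun _ => Classical.arbitrary M₀)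
      exact ⟨θ, hθ⟩
    obtain ⟨θ₀, hθ₀⟩ := hFne
    -- the sentence asserting the finite cover, transferred by completeness
    have hrealSent : ∀ (M : Type w) [L.Structure M],
        (((F.toList.foldr (fun θ acc => eqvF φ θ ⊔ acc) (eqvF φ θ₀)).relabel
          (Sum.inr : Fin m → Empty ⊕ Fin m)).iAlls (Fin m)).Realize (default : Empty → M) ↔
        ∀ b : Fin m → M, ∃ θ ∈ F, (eqvF φ θ).Realize b := by
      intro M _
      rw [Formula.realize_iAlls]
      simp only [Formula.realize_relabel, Function.comp_def]
      have key : ∀ i : Fin m → M,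
          (fun a => Sum.elim (default : Empty → M) i
            ((Sum.inr : Fin m → Empty ⊕ Fin m) a)) = i := by
        intro i; funext a; rfl
      constructor
      · intro h b
        have h2 := h b
        rw [key] at h2
        rcases (foldr_sup_realize (eqvF φ) F.toList (eqvF φ θ₀) b).1 h2 with
          ⟨θ, hθ, hr⟩ | hr
        · exact ⟨θ, Finset.mem_toList.1 hθ, hr⟩
        · exact ⟨θ₀, hθ₀, hr⟩
      · intro h i
        rw [key i]
        obtain ⟨θ, hθF, hr⟩ := h i
        exact (foldr_sup_realize (eqvF φ) F.toList (eqvF φ θ₀) i).2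
          (Or.inl ⟨θ, Finset.mem_toList.2 hθF, hr⟩)
    have hTSent : T ⊨ᵇ (((F.toList.foldr (fun θ acc => eqvF φ θ ⊔ acc) (eqvF φ θ₀)).relabel
        (Sum.inr : Fin m → Empty ⊕ Fin m)).iAlls (Fin m)) :=
      (hcomp.realize_sentence_iff _ M₀).1 ((hrealSent M₀).2 hFcover)
    -- the final Boolean combination
    refine ⟨F.toList.foldr (fun θ acc => mkF φ θ ⊔ acc) (mkF φ θ₀), ?_, ?_⟩
    · refine foldr_sup_boolComb _ _ _ (fun θ hθ => ?_) ?_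
      · exact .and (.of ⟨m, (eqvF φ θ).relabel Sum.inr⟩ (Or.inr ⟨eqvF φ θ, rfl⟩) id)
          (boolCombOf_mono Set.subset_union_left (hFbc θ (Finset.mem_toList.1 hθ)))
      · exact .and (.of ⟨m, (eqvF φ θ₀).relabel Sum.inr⟩ (Or.inr ⟨eqvF φ θ₀, rfl⟩) id)
          (boolCombOf_mono Set.subset_union_left (hFbc θ₀ hθ₀))
    · intro M _ _ hMT v
      haveI : M ⊨ T := hMT
      have hS : ∀ b : Fin m → M, ∃ θ ∈ F, (eqvF φ θ).Realize b :=
        (hrealSent M).1 (hTSent.realize_sentence M)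
      have hv : v = Sum.elim (fun _ => v (Sum.inl ())) (v ∘ Sum.inr) := by
        funext z
        rcases z with u | j
        · cases u; rfl
        · rfl
      rw [foldr_sup_realize]
      constructor
      · intro hφv
        obtain ⟨θ, hθF, he⟩ := hS (v ∘ Sum.inr)
        refine Or.inl ⟨θ, Finset.mem_toList.2 hθF, (realize_mkF φ θ v).2 ⟨he, ?_⟩⟩
        rw [hv]
        exact ((realize_eqvF φ θ (v ∘ Sum.inr)).1 he (v (Sum.inl ()))).1 (by rw [← hv]; exact hφv)
      · intro h
        have hex2 : ∃ θ ∈ F, (mkF φ θ).Realize v := by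
          rcases h with ⟨θ, hθ, hr⟩ | hr
          · exact ⟨θ, Finset.mem_toList.1 hθ, hr⟩
          · exact ⟨θ₀, hθ₀, hr⟩
        obtain ⟨θ, hθF, hmk⟩ := hex2
        obtain ⟨he, hθv⟩ := (realize_mkF φ θ v).1 hmk
        rw [hv]
        exact ((realize_eqvF φ θ (v ∘ Sum.inr)).1 he (v (Sum.inl ()))).2
          (by rw [← hv]; exact hθv)
end

section
/- In the theory ACF₀ of algebraically closed fields of characteristic 0 (in the language of rings), the partitioned formula φ(x; y_0, y_1) given by x² + y_0·x + y_1 = 0 does not have UDTFS rank ≤ 1 over ACF₀. -/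
set_option synthInstance.maxHeartbeats 1000000
set_option maxHeartbeats 1600000


open FirstOrder Language

universe w

/-- The partitioned ring formula `φ(x; y₀, y₁)` expressing `x² + y₀·x + y₁ = 0`. -/
def quadFormula : Language.ring.Formula (Unit ⊕ Fin 2) :=
  letI x : Language.ring.Term (Unit ⊕ Fin 2) := Term.var (Sum.inl ())
  letI y₀ : Language.ring.Term (Unit ⊕ Fin 2) := Term.var (Sum.inr 0)
  letI y₁ : Language.ring.Term (Unit ⊕ Fin 2) := Term.var (Sum.inr 1)
  Term.equal (x * x + y₀ * x + y₁) 0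

noncomputable section StmtAux

abbrev Aq : Type w := MvPolynomial (Fin 4) (ULift.{w} ℚ)

instance : CharZero (ULift.{w} ℚ) :=
  charZero_of_injective_ringHom (f := ((ULift.ringEquiv (R := ℚ)).symm : ℚ ≃+* ULift ℚ).toRingHom)
    (RingEquiv.injective _)

abbrev Kq : Type w := FractionRing Aq

abbrev Mq : Type w := AlgebraicClosure Kq

instance : FirstOrder.Ring.CompatibleRing Mq.{w} := FirstOrder.Ring.compatibleRingOfRing _

instance : CharP Mq.{w} 0 := CharP.ofCharZero _

def tq (i : Fin 4) : Mq.{w} := algebraMap Kq Mq (algebraMap Aq Kq (MvPolynomial.X i))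

theorem tq_inj : Function.Injective tq.{w} := by
  intro i j h
  exact MvPolynomial.X_injective
    (IsFractionRing.injective Aq Kq ((algebraMap Kq Mq.{w}).injective h))

def σq (e : Equiv.Perm (Fin 4)) : Mq.{w} ≃+* Mq.{w} :=
  IsAlgClosure.equivOfEquiv Mq Mq
    (IsFractionRing.ringEquivOfRingEquiv (K := Kq) (L := Kq)
      ((MvPolynomial.renameEquiv (ULift.{w} ℚ) e).toRingEquiv))

theorem σq_t (e : Equiv.Perm (Fin 4)) (i : Fin 4) : σq.{w} e (tq i) = tq (e i) := by
  rw [tq, σq, IsAlgClosure.equivOfEquiv_algebraMap, IsFractionRing.ringEquivOfRingEquiv_algebraMap]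
  simp [tq]

theorem quad_realize (a : Unit → Mq.{w}) (b : Fin 2 → Mq.{w}) :
    quadFormula.Realize (Sum.elim a b) ↔ a () * a () + b 0 * a () + b 1 = 0 := by
  simp [quadFormula]

end StmtAux

theorem stmt_19 : ¬ UDTFSRankLE.{w} Language.ring (Theory.ACF 0) quadFormula 1 := by
  classical
  rintro ⟨L₀, ψ, H⟩
  set t : Fin 4 → Mq.{w} := tq with ht
  set f : Fin 4 × Fin 4 → (Fin 2 → Mq.{w}) :=
    (fun p => ![-(t p.1 + t p.2), t p.1 * t p.2]) with hf
  set B : Finset (Fin 2 → Mq.{w}) :=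
    ((Finset.univ : Finset (Fin 4 × Fin 4)).filter fun p => p.1 ≠ p.2).image f with hBdef
  have hfB : ∀ i j : Fin 4, i ≠ j → f (i, j) ∈ B := by
    intro i j hij
    exact Finset.mem_image_of_mem f (by simp [hij])
  obtain ⟨ℓ, c, hcB, hc⟩ := H Mq.{w} inferInstance B ⟨f (0, 1), hfB 0 1 (by decide)⟩
      (fun _ => t 0)
  obtain ⟨p, hp, hfp⟩ := Finset.mem_image.1 (hcB 0)
  rw [Finset.mem_filter] at hp
  set r : Fin 4 := 0 with hr
  set u : Fin 4 := p.1 with hu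
  set v : Fin 4 := p.2 with hv
  have huv : u ≠ v := hp.2
  obtain ⟨s, hsr, hswap⟩ : ∃ s : Fin 4, s ≠ r ∧
      ((Equiv.swap r s) u = u ∧ (Equiv.swap r s) v = v ∨
       (Equiv.swap r s) u = v ∧ (Equiv.swap r s) v = u) := by
    rcases eq_or_ne r u with h | h
    · refine ⟨v, by rw [h]; exact huv.symm, Or.inr ⟨?_, ?_⟩⟩
      · rw [← h, Equiv.swap_apply_left]
      · rw [Equiv.swap_apply_right, h]
    · rcases eq_or_ne r v with h' | h'
      · refine ⟨u, h.symm, Or.inr ⟨?_, ?_⟩⟩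
        · rw [Equiv.swap_apply_right, h']
        · rw [← h', Equiv.swap_apply_left]
      · obtain ⟨s, h1, h2, h3⟩ :=
          (show ∀ r u v : Fin 4, ∃ s, s ≠ r ∧ s ≠ u ∧ s ≠ v by decide) r u v
        exact ⟨s, h1, Or.inl ⟨Equiv.swap_apply_of_ne_of_ne h.symm h2.symm,
          Equiv.swap_apply_of_ne_of_ne h'.symm h3.symm⟩⟩
  obtain ⟨w', hwr, hws⟩ := (show ∀ r s : Fin 4, ∃ w, w ≠ r ∧ w ≠ s by decide) r s
  set σ : Mq.{w} ≃+* Mq.{w} := σq (Equiv.swap r s) with hσ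
  have hσt : ∀ i, σ (t i) = t ((Equiv.swap r s) i) := fun i => σq_t _ i
  set g : Language.ring.Equiv Mq.{w} Mq.{w} := FirstOrder.Ring.languageEquivEquivRingEquiv.symm σ with hg
  have hgσ : ∀ x : Mq.{w}, g x = σ x := fun _ => rfl
  have hσc : ∀ k, σ (c 0 k) = c 0 k := by
    rw [← hfp, Fin.forall_fin_two]
    rcases hswap with ⟨h1, h2⟩ | ⟨h1, h2⟩ <;> refine ⟨?_, ?_⟩ <;>
      · simp only [hf, Matrix.cons_val_zero, Matrix.cons_val_one, Matrix.head_cons, map_neg,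
          map_add, map_mul, hσt, ← hu, ← hv, h1, h2]
        try ring
  have tr_root : ∀ i j : Fin 4,
      quadFormula.Realize (Sum.elim (fun _ : Unit => t r) (f (i, j))) ↔
        (t r - t i) * (t r - t j) = 0 := by
    intro i j
    rw [quad_realize]
    have : (t r - t i) * (t r - t j)
        = t r * t r + f (i, j) 0 * t r + f (i, j) 1 := by
      simp only [hf, Matrix.cons_val_zero, Matrix.cons_val_one, Matrix.head_cons]
      ring
    rw [this]
  have hψ1 : (ψ ℓ).Realize (Sum.elim (f (r, w')) fun jk => c jk.1 jk.2) :=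
    (hc _ (hfB r w' hwr.symm)).mpr ((tr_root r w').mpr (by rw [sub_self, zero_mul]))
  have hcomp : (⇑g ∘ Sum.elim (f (r, w')) fun jk : Fin 1 × Fin 2 => c jk.1 jk.2)
      = Sum.elim (f (s, w')) (fun jk : Fin 1 × Fin 2 => c jk.1 jk.2) := by
    funext x
    cases x with
    | inl k =>
      revert k
      show ∀ k, σ (f (r, w') k) = f (s, w') k
      rw [Fin.forall_fin_two]
      refine ⟨?_, ?_⟩ <;>
        simp only [hf, Matrix.cons_val_zero, Matrix.cons_val_one, Matrix.head_cons, map_neg,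
          map_add, map_mul, hσt, Equiv.swap_apply_left,
          Equiv.swap_apply_of_ne_of_ne hwr hws]
    | inr jk =>
      show σ (c jk.1 jk.2) = c jk.1 jk.2
      have h0 : jk.1 = 0 := Subsingleton.elim _ _
      rw [h0]
      exact hσc _
  have hψ2 : (ψ ℓ).Realize (Sum.elim (f (s, w')) fun jk => c jk.1 jk.2) := by
    rw [← hcomp]
    exact (StrongHomClass.realize_formula g (φ := ψ ℓ)).mpr hψ1
  have hfin := (tr_root s w').mp ((hc _ (hfB s w' hws.symm)).mp hψ2)
  rcases mul_eq_zero.1 hfin with h | h <;> rw [sub_eq_zero] at h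
  · exact hsr (tq_inj h).symm
  · exact hwr (tq_inj h).symm
end
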